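/- arXiv:2109.10203 — 3 statements merged into one kernel-verified Lean document; each statement's English description precedes it below -/
import Mathlib

section
/- Let (Γ,⊑) be an extended modular complex with vertex set V, and let Γ* be the 2-subdivision graph on V* = {(p,q) ∈ V×V : p ⊑ q}, where (p,q) and (p',q') are adjacent iff either p = p' and {q,q'} is an edge of Γ, or q = q' and {p,p'} is an edge of Γ. Then Γ* is connected, and its graph distance d* satisfies d*((p,q),(p',q')) = d(p,p') + d(q,q') for all (p,q),(p',q') ∈ V*. -/
namespace ZeroExt

variable {V : Type*}

/-- The metric interval `I(x,y)` in a graph. -/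
def interval (G : SimpleGraph V) (x y : V) : Set V :=
  {z | G.dist x z + G.dist z y = G.dist x y}

/-- `m` is a median of `x, y, z`. -/
def IsMedian (G : SimpleGraph V) (x y z m : V) : Prop :=
  m ∈ interval G x y ∧ m ∈ interval G y z ∧ m ∈ interval G x z

/-- A graph is modular if every triple of vertices has a median. -/
def Modular (G : SimpleGraph V) : Prop :=
  ∀ x y z : V, ∃ m : V, IsMedian G x y z m

/-- `(a,b,c)` is a shortest subpath. -/
def ShortestTriple (G : SimpleGraph V) (a b c : V) : Prop :=
  G.dist a b + G.dist b c = G.dist a c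

/-- `(a,b,c,d)` is a shortest subpath. -/
def ShortestQuad (G : SimpleGraph V) (a b c d : V) : Prop :=
  G.dist a b + G.dist b c + G.dist c d = G.dist a d

/-- `(x1,x2,x3,x4)` is an isometric rectangle. -/
def IsoRect (G : SimpleGraph V) (x1 x2 x3 x4 : V) : Prop :=
  ShortestTriple G x4 x1 x2 ∧ ShortestTriple G x1 x2 x3 ∧
    ShortestTriple G x2 x3 x4 ∧ ShortestTriple G x3 x4 x1

/-- A set of vertices is convex if it contains the interval of each pair of its points. -/
def Convex (G : SimpleGraph V) (U : Set V) : Prop :=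
  ∀ x ∈ U, ∀ y ∈ U, interval G x y ⊆ U

/-- `g` is a gate of `q` at `U`. -/
def IsGate (G : SimpleGraph V) (U : Set V) (q g : V) : Prop :=
  g ∈ U ∧ ∀ u ∈ U, G.dist q u = G.dist q g + G.dist g u

/-- A 4-cycle in a graph. -/
def IsFourCycle (G : SimpleGraph V) (x1 x2 x3 x4 : V) : Prop :=
  G.Adj x1 x2 ∧ G.Adj x2 x3 ∧ G.Adj x3 x4 ∧ G.Adj x4 x1 ∧ x1 ≠ x3 ∧ x2 ≠ x4

/-- A modular complex: a finite connected modular graph together with an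
acyclic admissible edge orientation. -/
structure ModularComplex (V : Type*) [Fintype V] where
  G : SimpleGraph V
  connected : G.Connected
  modular : Modular G
  ori : V → V → Prop
  ori_adj : ∀ {x y : V}, ori x y → G.Adj x y
  ori_total : ∀ {x y : V}, G.Adj x y → ori x y ∨ ori y x
  acyclic : ∀ {x y : V}, Relation.ReflTransGen ori x y → Relation.ReflTransGen ori y x → x = y
  admissible : ∀ {x1 x2 x3 x4 : V}, IsFourCycle G x1 x2 x3 x4 → ori x1 x2 → ori x4 x3

variable [Fintype V]

/-- The partial order `⪯` induced by the orientation. -/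
def ModularComplex.le (Γ : ModularComplex V) : V → V → Prop :=
  Relation.ReflTransGen Γ.ori

/-- The order interval `[p,q]`. -/
def ModularComplex.Icc (Γ : ModularComplex V) (p q : V) : Set V :=
  {x | Γ.le p x ∧ Γ.le x q}

/-- `m` is the greatest lower bound `p ∧ q`. -/
def ModularComplex.IsMeet (Γ : ModularComplex V) (p q m : V) : Prop :=
  Γ.le m p ∧ Γ.le m q ∧ ∀ x : V, Γ.le x p → Γ.le x q → Γ.le x m

/-- `j` is the least upper bound `p ∨ q`. -/
def ModularComplex.IsJoin (Γ : ModularComplex V) (p q j : V) : Prop :=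
  Γ.le p j ∧ Γ.le q j ∧ ∀ x : V, Γ.le p x → Γ.le q x → Γ.le j x

/-- `(p,q)` is a Boolean pair. -/
def ModularComplex.BooleanPair (Γ : ModularComplex V) (p q : V) : Prop :=
  ∃ (k : ℕ) (φ : Finset (Fin k) → V), Function.Injective φ ∧
    φ ∅ = p ∧ φ Finset.univ = q ∧
    ∀ (S : Finset (Fin k)) (i : Fin k), i ∉ S → Γ.ori (φ S) (φ (insert i S))

/-- An extended modular complex: a modular complex with an admissible relation `⊑`. -/
structure ExtendedModularComplex (V : Type*) [Fintype V] extends ModularComplex V where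
  sq : V → V → Prop
  sq_le : ∀ {p q : V}, sq p q → toModularComplex.le p q
  sq_refl : ∀ p : V, sq p p
  sq_edge : ∀ {p q : V}, ori p q → sq p q
  sq_interval : ∀ {p q a b : V}, sq p q → toModularComplex.le a b →
    a ∈ toModularComplex.Icc p q → b ∈ toModularComplex.Icc p q → sq a b
  sq_join : ∀ {p q1 q2 j : V}, sq p q1 → sq p q2 → toModularComplex.IsJoin q1 q2 j → sq p j
  sq_meet : ∀ {p1 p2 q m : V}, sq p1 q → sq p2 q → toModularComplex.IsMeet p1 p2 m → sq m q

/-- `L^+_p = {x : p ⊑ x}`. -/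
def ExtendedModularComplex.Lpos (Γ : ExtendedModularComplex V) (p : V) : Set V :=
  {x | Γ.sq p x}

/-- `L^-_p = {x : x ⊑ p}`. -/
def ExtendedModularComplex.Lneg (Γ : ExtendedModularComplex V) (p : V) : Set V :=
  {x | Γ.sq x p}

/-- `p, q` are ◇-neighbors. -/
def ExtendedModularComplex.DiamondNb (Γ : ExtendedModularComplex V) (p q : V) : Prop :=
  ∃ a b : V, Γ.sq a b ∧ p ∈ Γ.Icc a b ∧ q ∈ Γ.Icc a b

/-- The thickening `Δ(Γ)`. -/
def ExtendedModularComplex.thick (Γ : ExtendedModularComplex V) : SimpleGraph V where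
  Adj p q := p ≠ q ∧ Γ.DiamondNb p q
  symm := by
    constructor
    rintro p q ⟨hne, a, b, hab, hp, hq⟩
    exact ⟨hne.symm, a, b, hab, hq, hp⟩
  loopless := by constructor; rintro p ⟨hne, -⟩; exact hne rfl


/-- The 2-subdivision graph of an extended modular complex. -/
def ExtendedModularComplex.subdiv (Γ : ExtendedModularComplex V) :
    SimpleGraph {pq : V × V // Γ.sq pq.1 pq.2} where
  Adj a b := (a.1.1 = b.1.1 ∧ Γ.G.Adj a.1.2 b.1.2) ∨ (a.1.2 = b.1.2 ∧ Γ.G.Adj a.1.1 b.1.1)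
  symm := by
    constructor
    rintro a b (⟨h1, h2⟩ | ⟨h1, h2⟩)
    · exact Or.inl ⟨h1.symm, h2.symm⟩
    · exact Or.inr ⟨h1.symm, h2.symm⟩
  loopless := by
    constructor
    rintro a (⟨-, h⟩ | ⟨-, h⟩) <;> exact Γ.G.loopless.irrefl _ h



set_option linter.unusedSectionVars false

section Basics

variable {G : SimpleGraph V}

lemma adj_dist_one {x y : V} (h : G.Adj x y) : G.dist x y = 1 :=
  SimpleGraph.dist_eq_one_iff_adj.mpr h

lemma dist_zero_eq (hc : G.Connected) {x y : V} (h : G.dist x y = 0) : x = y :=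
  (hc.dist_eq_zero_iff).mp h

lemma dc (G : SimpleGraph V) (a b : V) : G.dist a b = G.dist b a := SimpleGraph.dist_comm

/-- neighbor of x on a geodesic towards y -/
lemma exists_adj_near (hc : G.Connected) {x y : V} {n : ℕ} (h : G.dist x y = n + 1) :
    ∃ z, G.Adj x z ∧ G.dist z y = n := by
  obtain ⟨p, hp⟩ := (hc x y).exists_walk_length_eq_dist
  cases p with
  | nil => rw [SimpleGraph.dist_self] at h; omega
  | cons hadj q =>
    rename_i z
    refine ⟨z, hadj, le_antisymm ?_ ?_⟩
    · have := SimpleGraph.dist_le q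
      rw [SimpleGraph.Walk.length_cons, h] at hp
      omega
    · have htri := hc.dist_triangle (u := x) (v := z) (w := y)
      have : G.dist x z = 1 := adj_dist_one hadj
      omega

/-- distances to a fixed vertex on two adjacent vertices differ (modular graphs). -/
lemma par (hc : G.Connected) (hm : Modular G) {x y : V} (h : G.Adj x y) (z : V) :
    G.dist z x ≠ G.dist z y := by
  intro heq
  obtain ⟨m, h1, h2, h3⟩ := hm x y z
  have hxy : G.dist x y = 1 := adj_dist_one h
  simp only [interval, Set.mem_setOf_eq] at h1 h2 h3
  rw [hxy] at h1
  -- m = x or m = y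
  have : G.dist x m = 0 ∨ G.dist m y = 0 := by omega
  rcases this with h0 | h0
  · have e := dist_zero_eq hc h0
    rw [← e] at h2
    have c1 : G.dist y x = G.dist x y := dc G y x
    have c2 : G.dist z x = G.dist x z := dc G z x
    have c3 : G.dist z y = G.dist y z := dc G z y
    omega
  · have e := dist_zero_eq hc h0
    rw [e] at h3
    have c1 : G.dist z x = G.dist x z := dc G z x
    have c2 : G.dist z y = G.dist y z := dc G z y
    omega

lemma par' (hc : G.Connected) (hm : Modular G) {x y : V} (h : G.Adj x y) (z : V) :
    G.dist z y = G.dist z x + 1 ∨ G.dist z x = G.dist z y + 1 := by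
  have h1 := hc.dist_triangle (u := z) (v := x) (w := y)
  have h2 := hc.dist_triangle (u := z) (v := y) (w := x)
  have h3 : G.dist x y = 1 := adj_dist_one h
  have h4 : G.dist y x = 1 := by rw [dc]; exact h3
  have := par hc hm h z
  omega

lemma triangle_free (hc : G.Connected) (hm : Modular G) {x y z : V}
    (h1 : G.Adj x y) (h2 : G.Adj y z) (h3 : G.Adj x z) : False := by
  have := par hc hm h2 x
  rw [adj_dist_one h1, adj_dist_one h3] at this
  exact this rfl

/-- quadrangle condition -/
lemma qc (hc : G.Connected) (hm : Modular G) {x y z : V} (hne : x ≠ y)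
    (hxy : G.dist x y = 2) (heq : G.dist z x = G.dist z y) :
    ∃ u, G.Adj x u ∧ G.Adj y u ∧ G.dist z u + 1 = G.dist z x := by
  obtain ⟨m, h1, h2, h3⟩ := hm x y z
  simp only [interval, Set.mem_setOf_eq] at h1 h2 h3
  rw [hxy] at h1
  rw [dc G y m] at h2
  rw [dc G z x, dc G z y] at heq
  -- cases on d x m
  have hm0 : G.dist x m ≠ 0 := by
    intro h0; have := dist_zero_eq hc h0; subst this; omega
  have hm2 : G.dist m y ≠ 0 := by
    intro h0; have := dist_zero_eq hc h0; subst this; omega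
  have hxm : G.dist x m = 1 := by omega
  have hmy : G.dist m y = 1 := by omega
  refine ⟨m, SimpleGraph.dist_eq_one_iff_adj.mp hxm,
    (SimpleGraph.dist_eq_one_iff_adj.mp hmy).symm, ?_⟩
  rw [dc G z x, dc G z m]
  omega

/-- gate of q at a nonempty convex set (finite V) -/
lemma exists_gate [Fintype V] (hc : G.Connected) (hm : Modular G) {U : Set V}
    (hconv : Convex G U) (hne : U.Nonempty) (q : V) : ∃ g, IsGate G U q g := by
  classical
  obtain ⟨g, hgU, hgmin⟩ := Set.exists_min_image U (fun u => G.dist q u) (Set.toFinite U) hne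
  refine ⟨g, hgU, fun u hu => ?_⟩
  obtain ⟨m, h1, h2, h3⟩ := hm q g u
  simp only [interval, Set.mem_setOf_eq] at h1 h2 h3
  have hmU : m ∈ U := hconv g hgU u hu (by simpa [interval] using h2)
  have : G.dist q g ≤ G.dist q m := hgmin m hmU
  have hmg : G.dist m g = 0 := by omega
  have e := dist_zero_eq hc hmg
  rw [e] at h3
  exact h3.symm

lemma dist_two (hc : G.Connected) {x z s : V} (h1 : G.Adj x z) (h2 : G.Adj z s)
    (hne : x ≠ s) (hna : ¬ G.Adj x s) : G.dist x s = 2 := by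
  have hle : G.dist x s ≤ 2 := by
    have := SimpleGraph.dist_le (SimpleGraph.Walk.cons h1 (SimpleGraph.Walk.cons h2 SimpleGraph.Walk.nil))
    simpa using this
  have h0 : 0 < G.dist x s := hc.pos_dist_of_ne hne
  have h1' : G.dist x s ≠ 1 := fun h => hna (SimpleGraph.dist_eq_one_iff_adj.mp h)
  omega

section Loc

variable [Fintype V] {G : SimpleGraph V} {S : Set V}

/-- from a walk within S, a geodesic walk within S -/
lemma geo_walk (hc : G.Connected) (hm : Modular G)
    (hloc : ∀ ⦃x y w : V⦄, x ∈ S → y ∈ S → x ≠ y → G.Adj x w → G.Adj y w → w ∈ S)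
    {x y : V} (p : G.Walk x y) (hp : ∀ v ∈ p.support, v ∈ S) :
    ∃ q : G.Walk x y, q.length = G.dist x y ∧ ∀ v ∈ q.support, v ∈ S := by
  classical
  suffices H : ∀ (n : ℕ) (x y : V) (p : G.Walk x y), p.length ≤ n →
      (∀ v ∈ p.support, v ∈ S) →
      ∃ q : G.Walk x y, q.length = G.dist x y ∧ ∀ v ∈ q.support, v ∈ S by
    exact H p.length x y p le_rfl hp
  intro n
  induction n with
  | zero =>
    intro x y p hlen hp
    cases p with
    | nil => exact ⟨SimpleGraph.Walk.nil, by simp [SimpleGraph.dist_self], by simpa using hp⟩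
    | cons hadj q => simp [SimpleGraph.Walk.length_cons] at hlen
  | succ n IH =>
    intro x y p hlen hp
    cases p with
    | nil => exact ⟨SimpleGraph.Walk.nil, by simp [SimpleGraph.dist_self], by simpa using hp⟩
    | cons hadj q =>
      rename_i z
      have hzS : z ∈ S := hp z (by simp)
      have hxS : x ∈ S := hp x (by simp)
      have hq : ∀ v ∈ q.support, v ∈ S := fun v hv => hp v (by simp [hv])
      have hqlen : q.length ≤ n := by
        simp only [SimpleGraph.Walk.length_cons] at hlen; omega
      obtain ⟨q', hq'len, hq'S⟩ := IH z y q hqlen hq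
      rcases par' hc hm hadj.symm y with hup | hdn
      · -- hup : G.dist y x = G.dist y z + 1
        rw [dc G y x, dc G y z] at hup
        refine ⟨SimpleGraph.Walk.cons hadj q', by simp [hq'len, hup], ?_⟩
        intro v hv
        rcases (by simpa using hv : v = x ∨ v ∈ q'.support) with rfl | hv
        · exact hxS
        · exact hq'S v hv
      · -- hdn : G.dist y z = G.dist y x + 1
        rw [dc G y z, dc G y x] at hdn
        cases q' with
        | nil =>
          exfalso
          rw [SimpleGraph.dist_self] at hdn
          omega
        | cons hzs r' =>
          rename_i s
          have hsS : s ∈ S := hq'S s (by simp)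
          have hr'S : ∀ v ∈ r'.support, v ∈ S := fun v hv => hq'S v (by simp [hv])
          have hr'len : r'.length + 1 = G.dist z y := by
            simpa [SimpleGraph.Walk.length_cons] using hq'len
          have hsy : G.dist s y + 1 = G.dist z y := by
            have h1 := SimpleGraph.dist_le r'
            have h2 := hc.dist_triangle (u := z) (v := s) (w := y)
            have h3 : G.dist z s = 1 := adj_dist_one hzs
            omega
          by_cases hsx : s = x
          · subst hsx
            exact ⟨r', by omega, hr'S⟩
          · have hna : ¬ G.Adj x s := fun ha => triangle_free hc hm hadj hzs ha
            have hd2 : G.dist x s = 2 := dist_two hc hadj hzs (Ne.symm hsx) hna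
            have heqd : G.dist y x = G.dist y s := by
              rw [dc G y x, dc G y s]; omega
            obtain ⟨u, hxu, hsu, hud⟩ := qc hc hm (Ne.symm hsx) hd2 heqd
            have huS : u ∈ S := hloc hxS hsS (Ne.symm hsx) hxu hsu
            have hudist0 : G.dist u y + 1 = G.dist x y := by
              rw [dc G u y, dc G x y]; omega
            -- recurse on walk u → s → ... → y of length dist z y ≤ q.length ≤ n
            have hlen2 : (SimpleGraph.Walk.cons hsu.symm r').length ≤ n := by
              have := SimpleGraph.dist_le q
              simp only [SimpleGraph.Walk.length_cons]
              omega
            obtain ⟨w, hwlen, hwS⟩ := IH u y (SimpleGraph.Walk.cons hsu.symm r') hlen2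
              (by
                intro v hv
                rcases (by simpa using hv : v = u ∨ v ∈ r'.support) with rfl | hv
                · exact huS
                · exact hr'S v hv)
            have hudist : G.dist u y + 1 = G.dist x y := by
              rw [dc G u y, dc G x y]; omega
            refine ⟨SimpleGraph.Walk.cons hxu w, by
              simp only [SimpleGraph.Walk.length_cons, hwlen]; omega, ?_⟩
            intro v hv
            rcases (by simpa using hv : v = x ∨ v ∈ w.support) with rfl | hv
            · exact hxS
            · exact hwS v hv

/-- local-to-global convexity -/
lemma convex_of_loc (hc : G.Connected) (hm : Modular G)
    (hloc : ∀ ⦃x y w : V⦄, x ∈ S → y ∈ S → x ≠ y → G.Adj x w → G.Adj y w → w ∈ S)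
    (hcon : ∀ ⦃x y : V⦄, x ∈ S → y ∈ S →
      ∃ p : G.Walk x y, ∀ v ∈ p.support, v ∈ S) :
    Convex G S := by
  classical
  suffices H : ∀ (n : ℕ) (x y : V), x ∈ S → y ∈ S → G.dist x y ≤ n →
      ∀ z ∈ interval G x y, z ∈ S by
    intro x hx y hy z hz
    exact H (G.dist x y) x y hx hy le_rfl z hz
  intro n
  induction n with
  | zero =>
    intro x y hx hy hd z hz
    simp only [interval, Set.mem_setOf_eq] at hz
    have h0 : G.dist x z = 0 := by omega
    rw [← dist_zero_eq hc h0]; exact hx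
  | succ n IH =>
    intro x y hx hy hd z hz
    simp only [interval, Set.mem_setOf_eq] at hz
    -- first handle the case z adjacent to x; general case by induction on dist x z
    have key : ∀ z', G.dist x z' = 1 → G.dist x z' + G.dist z' y = G.dist x y → z' ∈ S := by
      intro z' hz1 hz'
      by_cases hdy : G.dist x y ≤ 1
      · -- then z' = y
        have : G.dist z' y = 0 := by omega
        rw [dist_zero_eq hc this]; exact hy
      · -- dist x y ≥ 2
        obtain ⟨p, hpS⟩ := hcon hx hy
        obtain ⟨q, hqlen, hqS⟩ := geo_walk hc hm hloc p hpS
        cases q with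
        | nil => simp at hqlen; simp [SimpleGraph.dist_self] at hdy
        | cons hxs r =>
          rename_i s
          have hsS : s ∈ S := hqS s (by simp)
          have hsy : G.dist s y + 1 = G.dist x y := by
            have h1 := SimpleGraph.dist_le r
            have h2 := hc.dist_triangle (u := x) (v := s) (w := y)
            have h3 : G.dist x s = 1 := adj_dist_one hxs
            simp only [SimpleGraph.Walk.length_cons] at hqlen
            omega
          by_cases hzs : z' = s
          · rw [hzs]; exact hsS
          · have hna : ¬ G.Adj z' s := fun ha =>
              triangle_free hc hm (SimpleGraph.dist_eq_one_iff_adj.mp hz1) ha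
                hxs
            have hd2 : G.dist z' s = 2 :=
              dist_two hc (SimpleGraph.dist_eq_one_iff_adj.mp hz1).symm hxs hzs hna
            have heqd : G.dist y z' = G.dist y s := by
              rw [dc G y z', dc G y s]; omega
            obtain ⟨u, hz'u, hsu, hud⟩ := qc hc hm hzs hd2 heqd
            -- u ∈ interval s y, dist s y = dist x y - 1 ≤ n
            have huS : u ∈ S := by
              refine IH s y hsS hy (by omega) u ?_
              simp only [interval, Set.mem_setOf_eq]
              have h1 : G.dist s u = 1 := adj_dist_one hsu
              have h2 : G.dist u y + 1 = G.dist y z' := by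
                rw [dc G u y]; omega
              rw [dc G y z'] at h2
              omega
            have hxu : x ≠ u := by
              intro h; rw [← h] at hud
              rw [dc G y z', dc G y x] at hud
              omega
            exact hloc hx huS hxu (SimpleGraph.dist_eq_one_iff_adj.mp hz1) hz'u.symm
    -- general z by induction on dist x z
    have gen : ∀ (m : ℕ) (z : V), G.dist x z ≤ m → G.dist x z + G.dist z y = G.dist x y →
        z ∈ S := by
      intro m
      induction m with
      | zero =>
        intro z hzm hz
        have h0 : G.dist x z = 0 := by omega
        rw [← dist_zero_eq hc h0]; exact hx
      | succ m IHm =>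
        intro z hzm hz
        by_cases h0 : G.dist x z = 0
        · rw [← dist_zero_eq hc h0]; exact hx
        · by_cases h1 : G.dist x z = 1
          · exact key z h1 (by omega)
          · -- dist x z ≥ 2: take neighbor z₁ of x towards z
            obtain ⟨k, hk⟩ : ∃ k, G.dist x z = k + 1 := ⟨G.dist x z - 1, by omega⟩
            obtain ⟨z₁, hxz₁, hz₁z⟩ := exists_adj_near hc hk
            have hz₁d : G.dist x z₁ = 1 := adj_dist_one hxz₁
            have htr1 := hc.dist_triangle (u := z₁) (v := z) (w := y)
            have htr2 := hc.dist_triangle (u := x) (v := z₁) (w := y)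
            have htr3 := hc.dist_triangle (u := x) (v := z₁) (w := z)
            have hz₁I : G.dist x z₁ + G.dist z₁ y = G.dist x y := by omega
            have hz₁S : z₁ ∈ S := key z₁ hz₁d hz₁I
            -- z ∈ interval z₁ y with dist z₁ y = dist x y - 1 ≤ n
            refine IH z₁ y hz₁S hy (by omega) z ?_
            simp only [interval, Set.mem_setOf_eq]
            omega
    exact gen (G.dist x z) z le_rfl hz

end Loc

end Basics

namespace ModularComplex

variable (Γ : ModularComplex V)

/-- chains of the orientation relation, with length -/
inductive Chain : V → V → ℕ → Prop
  | refl (a : V) : Chain a a 0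
  | tail {a b c : V} {n : ℕ} : Chain a b n → Γ.ori b c → Chain a c (n + 1)

variable {Γ}

lemma ori_ne {x y : V} (h : Γ.ori x y) : x ≠ y := (Γ.ori_adj h).ne

lemma le_of_ori {x y : V} (h : Γ.ori x y) : Γ.le x y :=
  Relation.ReflTransGen.single h

lemma not_ori_both {x y : V} (h1 : Γ.ori x y) (h2 : Γ.ori y x) : False :=
  ori_ne h1 (Γ.acyclic (le_of_ori h1) (le_of_ori h2))

lemma chain_of_le {a b : V} (h : Γ.le a b) : ∃ n, Γ.Chain a b n := by
  induction h with
  | refl => exact ⟨0, Chain.refl a⟩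
  | tail _ hori IH => obtain ⟨n, hn⟩ := IH; exact ⟨n + 1, Chain.tail hn hori⟩

/-- every chain is a geodesic -/
lemma chain_geo : ∀ (n : ℕ) {a b : V}, Γ.Chain a b n → Γ.G.dist a b = n := by
  intro n
  induction n using Nat.strong_induction_on with
  | _ n IH =>
  intro a b hch
  match n, hch with
  | 0, Chain.refl _ => exact SimpleGraph.dist_self
  | n + 1, Chain.tail (b := m) hc hori =>
    have hm : Γ.G.dist a m = n := IH n (by omega) hc
    have hadj := Γ.ori_adj hori
    rcases par' Γ.connected Γ.modular hadj a with hup | hdn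
    · rwa [hm] at hup
    · exfalso
      rw [hm] at hdn
      -- d a b = n - 1; need n ≥ 1
      match n, hc, hm, hdn with
      | 0, Chain.refl _, hm, hdn =>
        -- a = m, d a b = -1 impossible: hdn : 0 = d a b + 1
        omega
      | n + 1, Chain.tail (b := e) hc' hori', hm, hdn =>
        have he : Γ.G.dist a e = n := IH n (by omega) hc'
        have hdab : Γ.G.dist a b = n := by omega
        -- e ≠ b
        have heb : e ≠ b := by
          intro h; subst h
          exact not_ori_both hori hori'
        have hna : ¬ Γ.G.Adj e b := fun ha =>
          triangle_free Γ.connected Γ.modular (Γ.ori_adj hori') hadj ha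
        have hd2 : Γ.G.dist e b = 2 :=
          dist_two Γ.connected (Γ.ori_adj hori') hadj heb hna
        obtain ⟨v, hev, hbv, hvd⟩ := qc Γ.connected Γ.modular heb hd2
          (by rw [he, hdab])
        rw [he] at hvd
        -- squares
        have hmv : m ≠ v := by
          intro h; subst h
          omega
        have hcyc1 : IsFourCycle Γ.G e m b v :=
          ⟨Γ.ori_adj hori', hadj, hbv, hev.symm, heb, hmv⟩
        have hcyc2 : IsFourCycle Γ.G m b v e :=
          ⟨hadj, hbv, hev.symm, Γ.ori_adj hori', hmv, fun h => heb h.symm⟩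
        have hvb : Γ.ori v b := Γ.admissible hcyc1 hori'
        have hev' : Γ.ori e v := Γ.admissible hcyc2 hori
        -- chain a → e → v of length n+1 gives dist a v = n+1, contradiction
        have : Γ.G.dist a v = n + 1 := IH (n + 1) (by omega) (Chain.tail hc' hev')
        omega

lemma le_dist_eq {a b : V} (h : Γ.le a b) : ∃ n, Γ.G.dist a b = n ∧ Γ.Chain a b n := by
  obtain ⟨n, hn⟩ := chain_of_le h
  exact ⟨n, chain_geo n hn, hn⟩

lemma chain_concat {a b c : V} {n m : ℕ} (h1 : Γ.Chain a b n) (h2 : Γ.Chain b c m) :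
    Γ.Chain a c (n + m) := by
  induction h2 with
  | refl => exact h1
  | tail _ hori IH => exact Chain.tail IH hori

lemma grad_add {a b c : V} (h1 : Γ.le a b) (h2 : Γ.le b c) :
    Γ.G.dist a c = Γ.G.dist a b + Γ.G.dist b c := by
  obtain ⟨n, hn, hcn⟩ := le_dist_eq h1
  obtain ⟨m, hm, hcm⟩ := le_dist_eq h2
  rw [chain_geo (n + m) (chain_concat hcn hcm), hn, hm]

lemma grad_step {a b c : V} (h1 : Γ.le a b) (h2 : Γ.ori b c) :
    Γ.G.dist a c = Γ.G.dist a b + 1 := by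
  rw [grad_add h1 (le_of_ori h2), adj_dist_one (Γ.ori_adj h2)]

/-- SJ': an up-neighbor towards z of an element below z is below z -/
lemma sj' : ∀ (k : ℕ) {x w z : V}, Γ.G.dist x z = k → Γ.ori x w → Γ.le x z →
    Γ.G.dist w z + 1 = Γ.G.dist x z → Γ.le w z := by
  intro k
  induction k using Nat.strong_induction_on with
  | _ k IH =>
  intro x w z hk hori hle hwd
  have hxz : x ≠ z := by
    intro h; subst h; rw [SimpleGraph.dist_self] at hwd; omega
  obtain ⟨x1, hox1, hx1z⟩ : ∃ x1, Γ.ori x x1 ∧ Γ.le x1 z := by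
    rcases (Relation.ReflTransGen.cases_head hle) with h | ⟨x1, h1, h2⟩
    · exact absurd h hxz
    · exact ⟨x1, h1, h2⟩
  have hx1d : Γ.G.dist x1 z + 1 = Γ.G.dist x z := by
    have := grad_add (le_of_ori hox1) hx1z
    have h1 : Γ.G.dist x x1 = 1 := adj_dist_one (Γ.ori_adj hox1)
    omega
  by_cases hwx1 : w = x1
  · subst hwx1; exact hx1z
  · have hna : ¬ Γ.G.Adj w x1 := fun ha =>
      triangle_free Γ.connected Γ.modular (Γ.ori_adj hori) ha (Γ.ori_adj hox1)
    have hd2 : Γ.G.dist w x1 = 2 :=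
      dist_two Γ.connected (Γ.ori_adj hori).symm (Γ.ori_adj hox1) hwx1 hna
    obtain ⟨v, hwv, hx1v, hvd⟩ := qc Γ.connected Γ.modular hwx1 hd2
      (by rw [dc Γ.G z w, dc Γ.G z x1]; omega)
    rw [dc Γ.G z w] at hvd
    have hwz : Γ.G.dist w z + 1 = k := by omega
    have hvz : Γ.G.dist v z + 2 = k := by rw [dc Γ.G v z]; omega
    have hxv : x ≠ v := by
      intro h; rw [← h] at hvz; omega
    have hcyc1 : IsFourCycle Γ.G x w v x1 :=
      ⟨Γ.ori_adj hori, hwv, hx1v.symm, (Γ.ori_adj hox1).symm, hxv, hwx1⟩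
    have hcyc2 : IsFourCycle Γ.G x x1 v w :=
      ⟨Γ.ori_adj hox1, hx1v, hwv.symm, (Γ.ori_adj hori).symm, hxv, fun h => hwx1 h.symm⟩
    have hx1v' : Γ.ori x1 v := Γ.admissible hcyc1 hori
    have hwv' : Γ.ori w v := Γ.admissible hcyc2 hox1
    have hlev : Γ.le v z := by
      refine IH (k - 1) (by omega) ?_ hx1v' hx1z ?_
      · omega
      · omega
    exact Relation.ReflTransGen.head hwv' hlev

/-- SM': a down-neighbor towards z (below x) of an element above z is above z -/
lemma sm' : ∀ (k : ℕ) {x w z : V}, Γ.G.dist z x = k → Γ.ori w x → Γ.le z x →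
    Γ.G.dist z w + 1 = Γ.G.dist z x → Γ.le z w := by
  intro k
  induction k using Nat.strong_induction_on with
  | _ k IH =>
  intro x w z hk hori hle hwd
  have hxz : z ≠ x := by
    intro h; subst h; rw [SimpleGraph.dist_self] at hwd; omega
  obtain ⟨x1, hx1z, hox1⟩ : ∃ x1, Γ.le z x1 ∧ Γ.ori x1 x := by
    rcases (Relation.ReflTransGen.cases_tail hle) with h | ⟨x1, h1, h2⟩
    · exact absurd h.symm hxz
    · exact ⟨x1, h1, h2⟩
  have hx1d : Γ.G.dist z x1 + 1 = Γ.G.dist z x := by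
    have := grad_add hx1z (le_of_ori hox1)
    have h1 : Γ.G.dist x1 x = 1 := adj_dist_one (Γ.ori_adj hox1)
    omega
  by_cases hwx1 : w = x1
  · subst hwx1; exact hx1z
  · have hna : ¬ Γ.G.Adj w x1 := fun ha =>
      triangle_free Γ.connected Γ.modular ha (Γ.ori_adj hox1) (Γ.ori_adj hori)
    have hd2 : Γ.G.dist w x1 = 2 :=
      dist_two Γ.connected (Γ.ori_adj hori) (Γ.ori_adj hox1).symm hwx1 hna
    obtain ⟨v, hwv, hx1v, hvd⟩ := qc Γ.connected Γ.modular (z := z) hwx1 hd2 (by omega)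
    have hxv : x ≠ v := by
      intro h; rw [← h] at hvd; omega
    -- cycles: (w, x, x1, v) with ori w x gives ori v x1; (x1, x, w, v) with ori x1 x gives ori v w
    have hcyc1 : IsFourCycle Γ.G w x x1 v :=
      ⟨Γ.ori_adj hori, (Γ.ori_adj hox1).symm, hx1v, hwv.symm, hwx1, hxv⟩
    have hcyc2 : IsFourCycle Γ.G x1 x w v :=
      ⟨Γ.ori_adj hox1, (Γ.ori_adj hori).symm, hwv, hx1v.symm, fun h => hwx1 h.symm, hxv⟩
    have hvx1 : Γ.ori v x1 := Γ.admissible hcyc1 hori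
    have hvw : Γ.ori v w := Γ.admissible hcyc2 hox1
    have hlev : Γ.le z v := by
      refine IH (k - 1) (by omega) ?_ hvx1 hx1z ?_
      · omega
      · omega
    exact Relation.ReflTransGen.tail hlev hvw

/-- a common up-neighbor is the join -/
lemma square_join {x y w : V} (hxy : x ≠ y) (h1 : Γ.ori x w) (h2 : Γ.ori y w) :
    Γ.IsJoin x y w := by
  refine ⟨le_of_ori h1, le_of_ori h2, fun z hxz hyz => ?_⟩
  rcases par' Γ.connected Γ.modular (Γ.ori_adj h1) z with hA | hB
  · -- d z w = d z x + 1
    rcases par' Γ.connected Γ.modular (Γ.ori_adj h2) z with hC | hD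
    · -- d z w = d z y + 1 as well : bad case, derive contradiction
      exfalso
      have heq : Γ.G.dist z x = Γ.G.dist z y := by omega
      have hna : ¬ Γ.G.Adj x y := fun ha =>
        triangle_free Γ.connected Γ.modular ha (Γ.ori_adj h2) (Γ.ori_adj h1)
      have hd2 : Γ.G.dist x y = 2 :=
        dist_two Γ.connected (Γ.ori_adj h1) (Γ.ori_adj h2).symm hxy hna
      obtain ⟨u, hxu, hyu, hud⟩ := qc Γ.connected Γ.modular hxy hd2 heq
      have hk0 : Γ.G.dist z x ≠ 0 := by omega
      -- orientation of edge x u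
      have hux : Γ.ori u x := by
        rcases Γ.ori_total hxu with h | h
        · exfalso
          -- ori x u : cycle (x, u, y, w) gives ori w y, contradiction
          have huw : u ≠ w := by
            intro he; subst he; omega
          have hcyc : IsFourCycle Γ.G x u y w :=
            ⟨hxu, hyu.symm, Γ.ori_adj h2, (Γ.ori_adj h1).symm, hxy, huw⟩
          exact not_ori_both (Γ.admissible hcyc h) h2
        · exact h
      -- u ⪯ x ⪯ z: grading gives d u z = d x z + 1, but d z u = d z x - 1
      have := grad_add (le_of_ori hux) hxz
      have h1' : Γ.G.dist u x = 1 := adj_dist_one (Γ.ori_adj hux)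
      rw [dc Γ.G u z, dc Γ.G x z] at this
      omega
    · -- d z y = d z w + 1 : use sj' on (y, w, z)
      exact sj' (Γ.G.dist y z) rfl h2 hyz (by rw [dc Γ.G w z, dc Γ.G y z]; omega)
  · -- d z x = d z w + 1 : use sj' on (x, w, z)
    exact sj' (Γ.G.dist x z) rfl h1 hxz (by rw [dc Γ.G w z, dc Γ.G x z]; omega)

/-- a common down-neighbor is the meet -/
lemma square_meet {x y w : V} (hxy : x ≠ y) (h1 : Γ.ori w x) (h2 : Γ.ori w y) :
    Γ.IsMeet x y w := by
  refine ⟨le_of_ori h1, le_of_ori h2, fun z hxz hyz => ?_⟩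
  rcases par' Γ.connected Γ.modular (Γ.ori_adj h1).symm z with hA | hB
  · -- hA : d z w = d z x + 1 (w further than x)
    rcases par' Γ.connected Γ.modular (Γ.ori_adj h2).symm z with hC | hD
    · -- hC : d z w = d z y + 1 as well: bad case
      exfalso
      have heq : Γ.G.dist z x = Γ.G.dist z y := by omega
      have hna : ¬ Γ.G.Adj x y := fun ha =>
        triangle_free Γ.connected Γ.modular ha (Γ.ori_adj h2).symm (Γ.ori_adj h1).symm
      have hd2 : Γ.G.dist x y = 2 :=
        dist_two Γ.connected (Γ.ori_adj h1).symm (Γ.ori_adj h2) hxy hna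
      obtain ⟨u, hxu, hyu, hud⟩ := qc Γ.connected Γ.modular hxy hd2 heq
      have hux : Γ.ori u x := by
        rcases Γ.ori_total hxu with h | h
        · exfalso
          have hgr := grad_step hxz h
          omega
        · exact h
      have huy : Γ.ori u y := by
        rcases Γ.ori_total hyu with h | h
        · exfalso
          have hgr := grad_step hyz h
          omega
        · exact h
      have huw : u ≠ w := by
        intro he; subst he; omega
      have hcyc : IsFourCycle Γ.G u x w y :=
        ⟨hxu.symm, (Γ.ori_adj h1).symm, Γ.ori_adj h2, hyu, huw, hxy⟩
      exact not_ori_both (Γ.admissible hcyc hux) h2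
    · -- hD : d z y = d z w + 1 : use sm' via y
      exact sm' (Γ.G.dist z y) rfl h2 hyz (by omega)
  · -- hB : d z x = d z w + 1 : use sm' via x
    exact sm' (Γ.G.dist z x) rfl h1 hxz (by omega)

end ModularComplex

namespace ExtendedModularComplex

open ModularComplex

variable {Γ : ExtendedModularComplex V}

/-- sq to initial segments of chains: p ⊑ q, p ⪯ a ⪯ q implies p ⊑ a and a ⊑ q -/
lemma sq_low {p q a : V} (h : Γ.sq p q) (h1 : Γ.toModularComplex.le p a)
    (h2 : Γ.toModularComplex.le a q) : Γ.sq p a :=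
  Γ.sq_interval h h1 ⟨Relation.ReflTransGen.refl, Γ.sq_le h⟩ ⟨h1, h2⟩

lemma sq_high {p q a : V} (h : Γ.sq p q) (h1 : Γ.toModularComplex.le p a)
    (h2 : Γ.toModularComplex.le a q) : Γ.sq a q :=
  Γ.sq_interval h h2 ⟨h1, h2⟩ ⟨Γ.sq_le h, Relation.ReflTransGen.refl⟩

/-- local convexity of Lpos -/
lemma lpos_loc {p x y w : V} (hx : Γ.sq p x) (hy : Γ.sq p y) (hxy : x ≠ y)
    (h1 : Γ.toModularComplex.G.Adj x w) (h2 : Γ.toModularComplex.G.Adj y w) : Γ.sq p w := by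
  rcases Γ.ori_total h1 with hxw | hwx
  · rcases Γ.ori_total h2 with hyw | hwy
    · -- both up: w is the join
      exact Γ.sq_join hx hy (square_join hxy hxw hyw)
    · -- x → w, w → y : p ⪯ w ⪯ y
      have hlw : Γ.toModularComplex.le p w :=
        Relation.ReflTransGen.tail (Γ.sq_le hx) hxw
      exact sq_low hy hlw (le_of_ori hwy)
  · rcases Γ.ori_total h2 with hyw | hwy
    · -- y → w, w → x
      have hlw : Γ.toModularComplex.le p w :=
        Relation.ReflTransGen.tail (Γ.sq_le hy) hyw
      exact sq_low hx hlw (le_of_ori hwx)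
    · -- both down: w is the meet
      have hmeet := square_meet hxy hwx hwy
      have hlw : Γ.toModularComplex.le p w := hmeet.2.2 p (Γ.sq_le hx) (Γ.sq_le hy)
      exact sq_low hx hlw (le_of_ori hwx)

/-- local convexity of Lneg -/
lemma lneg_loc {q x y w : V} (hx : Γ.sq x q) (hy : Γ.sq y q) (hxy : x ≠ y)
    (h1 : Γ.toModularComplex.G.Adj x w) (h2 : Γ.toModularComplex.G.Adj y w) : Γ.sq w q := by
  rcases Γ.ori_total h1 with hxw | hwx
  · rcases Γ.ori_total h2 with hyw | hwy
    · -- both up: w is the join, w ⪯ q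
      have hjoin := square_join hxy hxw hyw
      have hlw : Γ.toModularComplex.le w q := hjoin.2.2 q (Γ.sq_le hx) (Γ.sq_le hy)
      exact sq_high hx (le_of_ori hxw) hlw
    · -- x → w → y
      have hlw : Γ.toModularComplex.le w q :=
        Relation.ReflTransGen.head hwy (Γ.sq_le hy)
      exact sq_high hx (le_of_ori hxw) hlw
  · rcases Γ.ori_total h2 with hyw | hwy
    · have hlw : Γ.toModularComplex.le w q :=
        Relation.ReflTransGen.head hwx (Γ.sq_le hx)
      exact sq_high hy (le_of_ori hyw) hlw
    · -- both down: w is the meet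
      exact Γ.sq_meet hx hy (square_meet hxy hwx hwy)

/-- walk within Lpos from p to any member -/
lemma chain_walk {a b : V} (h : Γ.toModularComplex.le a b) :
    ∃ w : Γ.toModularComplex.G.Walk a b, ∀ v ∈ w.support,
      Γ.toModularComplex.le a v ∧ Γ.toModularComplex.le v b := by
  induction h with
  | refl =>
    exact ⟨SimpleGraph.Walk.nil, by
      intro v hv
      simp only [SimpleGraph.Walk.support_nil, List.mem_singleton] at hv
      subst hv
      exact ⟨Relation.ReflTransGen.refl, Relation.ReflTransGen.refl⟩⟩
  | @tail b c hab hbc IH =>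
    obtain ⟨w, hw⟩ := IH
    refine ⟨w.concat (Γ.ori_adj hbc), ?_⟩
    intro v hv
    rw [SimpleGraph.Walk.support_concat] at hv
    rcases List.mem_append.mp hv with hv | hv
    · obtain ⟨h1, h2⟩ := hw v hv
      exact ⟨h1, Relation.ReflTransGen.tail h2 hbc⟩
    · rw [List.mem_singleton.mp hv]
      exact ⟨Relation.ReflTransGen.tail hab hbc, Relation.ReflTransGen.refl⟩

lemma lpos_connected {p x y : V} (hx : Γ.sq p x) (hy : Γ.sq p y) :
    ∃ w : Γ.toModularComplex.G.Walk x y, ∀ v ∈ w.support, Γ.sq p v := by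
  obtain ⟨w1, hw1⟩ := chain_walk (Γ.sq_le hx)
  obtain ⟨w2, hw2⟩ := chain_walk (Γ.sq_le hy)
  refine ⟨w1.reverse.append w2, ?_⟩
  intro v hv
  rw [SimpleGraph.Walk.support_append] at hv
  rcases List.mem_append.mp hv with hv | hv
  · rw [SimpleGraph.Walk.support_reverse] at hv
    obtain ⟨h1, h2⟩ := hw1 v (List.mem_reverse.mp hv)
    exact sq_low hx h1 h2
  · have : v ∈ w2.support := List.mem_of_mem_tail hv
    obtain ⟨h1, h2⟩ := hw2 v this
    exact sq_low hy h1 h2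

lemma lneg_connected {q x y : V} (hx : Γ.sq x q) (hy : Γ.sq y q) :
    ∃ w : Γ.toModularComplex.G.Walk x y, ∀ v ∈ w.support, Γ.sq v q := by
  obtain ⟨w1, hw1⟩ := chain_walk (Γ.sq_le hx)
  obtain ⟨w2, hw2⟩ := chain_walk (Γ.sq_le hy)
  refine ⟨w1.append w2.reverse, ?_⟩
  intro v hv
  rw [SimpleGraph.Walk.support_append] at hv
  rcases List.mem_append.mp hv with hv | hv
  · obtain ⟨h1, h2⟩ := hw1 v hv
    exact sq_high hx h1 h2
  · rw [SimpleGraph.Walk.support_reverse] at hv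
    obtain ⟨h1, h2⟩ := hw2 v (List.mem_reverse.mp (List.mem_of_mem_tail hv))
    exact sq_high hy h1 h2

lemma lpos_convex (p : V) : Convex Γ.toModularComplex.G (Γ.Lpos p) :=
  convex_of_loc Γ.connected Γ.modular
    (fun _ _ _ hx hy hxy h1 h2 => lpos_loc hx hy hxy h1 h2)
    (fun _ _ hx hy => lpos_connected hx hy)

lemma lneg_convex (q : V) : Convex Γ.toModularComplex.G (Γ.Lneg q) :=
  convex_of_loc Γ.connected Γ.modular
    (fun _ _ _ hx hy hxy h1 h2 => lneg_loc hx hy hxy h1 h2)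
    (fun _ _ hx hy => lneg_connected hx hy)

lemma exists_gate' (z : V) {U : Set V} (hconv : Convex Γ.toModularComplex.G U)
    (hne : U.Nonempty) : ∃ g, IsGate Γ.toModularComplex.G U z g :=
  exists_gate Γ.connected Γ.modular hconv hne z

/-- if there is no sq-move of the first coordinate towards z, then p is the gate of z
in Lneg q -/
lemma gate_neg {p q : V} (hpq : Γ.sq p q) (z : V)
    (M : ¬∃ c, Γ.toModularComplex.G.Adj p c ∧ Γ.sq c q ∧
      Γ.toModularComplex.G.dist c z + 1 = Γ.toModularComplex.G.dist p z) :
    ∀ u, Γ.sq u q → Γ.toModularComplex.G.dist z u =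
      Γ.toModularComplex.G.dist z p + Γ.toModularComplex.G.dist p u := by
  obtain ⟨h, hU, hg⟩ := exists_gate' z (lneg_convex q) ⟨q, Γ.sq_refl q⟩
  have hhp : h = p := by
    by_contra hne
    have hd : Γ.toModularComplex.G.dist p h ≠ 0 := fun h0 =>
      hne (dist_zero_eq Γ.connected h0).symm
    obtain ⟨m, hmelt⟩ : ∃ m, Γ.toModularComplex.G.dist p h = m + 1 :=
      ⟨Γ.toModularComplex.G.dist p h - 1, by omega⟩
    obtain ⟨c, hpc, hch⟩ := exists_adj_near Γ.connected hmelt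
    have hcint : c ∈ interval Γ.toModularComplex.G p h := by
      simp only [interval, Set.mem_setOf_eq, adj_dist_one hpc]
      omega
    have hcU : Γ.sq c q := lneg_convex q p hpq h hU hcint
    refine M ⟨c, hpc, hcU, ?_⟩
    have e1 := hg c hcU
    have e2 := hg p hpq
    rw [dc Γ.toModularComplex.G z c, dc Γ.toModularComplex.G z p,
      dc Γ.toModularComplex.G h c, dc Γ.toModularComplex.G h p] at *
    omega
  subst hhp
  exact fun u hu => hg u hu

/-- if there is no sq-move of the second coordinate towards z, then q is the gate of z
in Lpos p -/
lemma gate_pos {p q : V} (hpq : Γ.sq p q) (z : V)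
    (M : ¬∃ e, Γ.toModularComplex.G.Adj q e ∧ Γ.sq p e ∧
      Γ.toModularComplex.G.dist e z + 1 = Γ.toModularComplex.G.dist q z) :
    ∀ u, Γ.sq p u → Γ.toModularComplex.G.dist z u =
      Γ.toModularComplex.G.dist z q + Γ.toModularComplex.G.dist q u := by
  obtain ⟨g, hU, hg⟩ := exists_gate' z (lpos_convex p) ⟨q, hpq⟩
  have hgq : g = q := by
    by_contra hne
    have hd : Γ.toModularComplex.G.dist q g ≠ 0 := fun h0 =>
      hne (dist_zero_eq Γ.connected h0).symm
    obtain ⟨m, hmelt⟩ : ∃ m, Γ.toModularComplex.G.dist q g = m + 1 :=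
      ⟨Γ.toModularComplex.G.dist q g - 1, by omega⟩
    obtain ⟨e, hqe, heg⟩ := exists_adj_near Γ.connected hmelt
    have heint : e ∈ interval Γ.toModularComplex.G q g := by
      simp only [interval, Set.mem_setOf_eq, adj_dist_one hqe]
      omega
    have heU : Γ.sq p e := lpos_convex p q hpq g hU heint
    refine M ⟨e, hqe, heU, ?_⟩
    have e1 := hg e heU
    have e2 := hg q hpq
    rw [dc Γ.toModularComplex.G z e, dc Γ.toModularComplex.G z q,
      dc Γ.toModularComplex.G g e, dc Γ.toModularComplex.G g q] at *
    omega
  subst hgq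
  exact fun u hu => hg u hu

/-- the chain-transport contradiction -/
lemma transport {q q' : V} {t2 : ℕ}
    (he : ∀ e, Γ.toModularComplex.G.Adj q e →
      Γ.toModularComplex.G.dist e q' + 1 = t2 → Γ.ori q e)
    (hq2 : Γ.toModularComplex.G.dist q q' = t2) :
    ∀ (n : ℕ) (a ca : V), Γ.toModularComplex.G.dist a q = n →
      Γ.toModularComplex.le a q → Γ.toModularComplex.G.Adj ca a → Γ.ori ca a →
      Γ.toModularComplex.G.dist ca q' + 1 = Γ.toModularComplex.G.dist a q' →
      Γ.toModularComplex.G.dist a q' = Γ.toModularComplex.G.dist a q + t2 → False := by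
  intro n
  induction n using Nat.strong_induction_on with
  | _ n IH =>
  intro a ca hn hleq hadj hori hca hinv
  rcases Nat.eq_zero_or_pos n with h0 | hpos
  · -- a = q
    subst h0
    have haq : a = q := dist_zero_eq Γ.connected hn
    subst haq
    rw [hq2] at hca
    exact not_ori_both (he ca hadj.symm (by omega)) hori
  · have haq : a ≠ q := by
      intro h; subst h; rw [SimpleGraph.dist_self] at hn; omega
    obtain ⟨a1, hoa1, ha1q⟩ : ∃ a1, Γ.ori a a1 ∧ Γ.toModularComplex.le a1 q := by
      rcases (Relation.ReflTransGen.cases_head hleq) with h | ⟨a1, h1, h2⟩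
      · exact absurd h haq
      · exact ⟨a1, h1, h2⟩
    have ha1n : Γ.toModularComplex.G.dist a1 q + 1 = n := by
      have := ModularComplex.grad_add (ModularComplex.le_of_ori hoa1) ha1q
      have h1 : Γ.toModularComplex.G.dist a a1 = 1 := adj_dist_one (Γ.ori_adj hoa1)
      omega
    have ha1q' : Γ.toModularComplex.G.dist a1 q' + 1 = Γ.toModularComplex.G.dist a q' := by
      have htr1 := Γ.connected.dist_triangle (u := a1) (v := q) (w := q')
      have htr2 := Γ.connected.dist_triangle (u := a) (v := a1) (w := q')
      have h1 : Γ.toModularComplex.G.dist a a1 = 1 := adj_dist_one (Γ.ori_adj hoa1)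
      have h2 : Γ.toModularComplex.G.dist a1 q + 1 = n := ha1n
      omega
    have hcane : ca ≠ a1 := by
      intro h; subst h; exact not_ori_both hori hoa1
    have hna : ¬ Γ.toModularComplex.G.Adj ca a1 := fun ha =>
      triangle_free Γ.connected Γ.modular hadj (Γ.ori_adj hoa1) ha
    have hd2 : Γ.toModularComplex.G.dist ca a1 = 2 :=
      dist_two Γ.connected hadj (Γ.ori_adj hoa1) hcane hna
    obtain ⟨v, hcav, ha1v, hvd⟩ := qc Γ.connected Γ.modular (z := q') hcane hd2
      (by rw [dc Γ.toModularComplex.G q' ca, dc Γ.toModularComplex.G q' a1]; omega)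
    rw [dc Γ.toModularComplex.G q' ca] at hvd
    have hav : a ≠ v := by
      intro h
      rw [← h, dc Γ.toModularComplex.G q' a] at hvd
      omega
    have hcyc : IsFourCycle Γ.toModularComplex.G ca a a1 v :=
      ⟨hadj, Γ.ori_adj hoa1, ha1v, hcav.symm, hcane, hav⟩
    have hva1 : Γ.ori v a1 := Γ.admissible hcyc hori
    refine IH (n - 1) (by omega) a1 v (by omega) ha1q ha1v.symm hva1 ?_ ?_
    · rw [dc Γ.toModularComplex.G q' v] at hvd
      omega
    · omega

/-- the no-local-move situation forces equality -/
lemma key_aux {p q p' q' : V} (hpq : Γ.sq p q) (hpq' : Γ.sq p' q')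
    (M1 : ¬∃ c, Γ.toModularComplex.G.Adj p c ∧ Γ.sq c q ∧
      Γ.toModularComplex.G.dist c p' + 1 = Γ.toModularComplex.G.dist p p')
    (M2 : ¬∃ e, Γ.toModularComplex.G.Adj q e ∧ Γ.sq p e ∧
      Γ.toModularComplex.G.dist e q' + 1 = Γ.toModularComplex.G.dist q q')
    (M3 : ¬∃ c, Γ.toModularComplex.G.Adj p' c ∧ Γ.sq c q' ∧
      Γ.toModularComplex.G.dist c p + 1 = Γ.toModularComplex.G.dist p' p)
    (M4 : ¬∃ e, Γ.toModularComplex.G.Adj q' e ∧ Γ.sq p' e ∧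
      Γ.toModularComplex.G.dist e q + 1 = Γ.toModularComplex.G.dist q' q) :
    p = p' ∧ q = q' := by
  have h3 := gate_neg hpq p' M1
  have h4 := gate_pos hpq q' M2
  have h1 := gate_neg hpq' p M3
  have h2 := gate_pos hpq' q M4
  have F1 := h1 q' (Γ.sq_refl q')
  have F2 := h2 p' (Γ.sq_refl p')
  have F3 := h3 q (Γ.sq_refl q)
  have F4 := h4 p (Γ.sq_refl p)
  have c1 : Γ.toModularComplex.G.dist q' p' = Γ.toModularComplex.G.dist p' q' :=
    dc Γ.toModularComplex.G q' p'
  have c2 : Γ.toModularComplex.G.dist q' q = Γ.toModularComplex.G.dist q q' :=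
    dc Γ.toModularComplex.G q' q
  have c3 : Γ.toModularComplex.G.dist p' p = Γ.toModularComplex.G.dist p p' :=
    dc Γ.toModularComplex.G p' p
  have c4 : Γ.toModularComplex.G.dist q' p = Γ.toModularComplex.G.dist p q' :=
    dc Γ.toModularComplex.G q' p
  have c5 : Γ.toModularComplex.G.dist p' q = Γ.toModularComplex.G.dist q p' :=
    dc Γ.toModularComplex.G p' q
  have c6 : Γ.toModularComplex.G.dist q p = Γ.toModularComplex.G.dist p q :=
    dc Γ.toModularComplex.G q p
  -- F1 : d p q' = d p p' + d p' q' ; F2 : d q p' = d q q' + d p' q'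
  -- F3 : d q p' = d p p' + d p q ; F4 : d p q' = d q q' + d p q
  have hk : Γ.toModularComplex.G.dist p q = Γ.toModularComplex.G.dist p' q' := by omega
  have ht : Γ.toModularComplex.G.dist p p' = Γ.toModularComplex.G.dist q q' := by omega
  by_cases ht0 : Γ.toModularComplex.G.dist p p' = 0
  · exact ⟨dist_zero_eq Γ.connected ht0, dist_zero_eq Γ.connected (by omega)⟩
  · exfalso
    obtain ⟨m, hmelt⟩ : ∃ m, Γ.toModularComplex.G.dist p p' = m + 1 :=
      ⟨Γ.toModularComplex.G.dist p p' - 1, by omega⟩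
    obtain ⟨c, hpc, hcp'⟩ := exists_adj_near Γ.connected hmelt
    have hdpc : Γ.toModularComplex.G.dist p c = 1 := adj_dist_one hpc
    have c7 : Γ.toModularComplex.G.dist c p = 1 := by
      rw [dc Γ.toModularComplex.G c p]; exact hdpc
    by_cases hk0 : Γ.toModularComplex.G.dist p q = 0
    · -- k = 0 : p = q, p' = q'
      have hpq0 : p = q := dist_zero_eq Γ.connected hk0
      have hpq0' : p' = q' := dist_zero_eq Γ.connected (by omega)
      subst hpq0
      subst hpq0'
      rcases Γ.ori_total hpc with h | h
      · have h4c := h4 c (Γ.sq_edge h)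
        have d1 : Γ.toModularComplex.G.dist p' c = Γ.toModularComplex.G.dist c p' :=
          dc Γ.toModularComplex.G p' c
        omega
      · have h3c := h3 c (Γ.sq_edge h)
        have d1 : Γ.toModularComplex.G.dist p' c = Γ.toModularComplex.G.dist c p' :=
          dc Γ.toModularComplex.G p' c
        omega
    · -- k ≥ 1
      have htr1 : Γ.toModularComplex.G.dist c q' ≤
          Γ.toModularComplex.G.dist c p' + Γ.toModularComplex.G.dist p' q' :=
        Γ.connected.dist_triangle
      have htr2 : Γ.toModularComplex.G.dist p q' ≤
          Γ.toModularComplex.G.dist p c + Γ.toModularComplex.G.dist c q' :=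
        Γ.connected.dist_triangle
      have htr3 : Γ.toModularComplex.G.dist p q ≤
          Γ.toModularComplex.G.dist p c + Γ.toModularComplex.G.dist c q :=
        Γ.connected.dist_triangle
      -- c-claim : ori c p
      have hcp : Γ.ori c p := by
        rcases Γ.ori_total hpc with h | h
        swap
        · exact h
        · exfalso
          have h4c := h4 c (Γ.sq_edge h)
          -- h4c : d q' c = d q' q + d q c
          have d1 : Γ.toModularComplex.G.dist q' c = Γ.toModularComplex.G.dist c q' :=
            dc Γ.toModularComplex.G q' c
          have d2 : Γ.toModularComplex.G.dist q c = Γ.toModularComplex.G.dist c q :=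
            dc Γ.toModularComplex.G q c
          have hqc : Γ.toModularComplex.G.dist c q + 1 = Γ.toModularComplex.G.dist p q := by
            omega
          have hlecq : Γ.toModularComplex.le c q :=
            ModularComplex.sj' (Γ.toModularComplex.G.dist p q) rfl h (Γ.sq_le hpq) hqc
          have hsqcq : Γ.sq c q := sq_high hpq (ModularComplex.le_of_ori h) hlecq
          exact M1 ⟨c, hpc, hsqcq, by omega⟩
      -- e-claim
      have heclaim : ∀ e, Γ.toModularComplex.G.Adj q e →
          Γ.toModularComplex.G.dist e q' + 1 = Γ.toModularComplex.G.dist q q' →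
          Γ.ori q e := by
        intro e hqe hedist
        rcases Γ.ori_total hqe with h | h
        · exact h
        · exfalso
          have h3e := h3 e (Γ.sq_edge h)
          -- h3e : d p' e = d p' p + d p e
          have d1 : Γ.toModularComplex.G.dist p' e = Γ.toModularComplex.G.dist e p' :=
            dc Γ.toModularComplex.G p' e
          have d2 : Γ.toModularComplex.G.dist e q = 1 := adj_dist_one (Γ.ori_adj h)
          have htr4 : Γ.toModularComplex.G.dist e p' ≤
              Γ.toModularComplex.G.dist e q' + Γ.toModularComplex.G.dist q' p' :=
            Γ.connected.dist_triangle
          have htr5 : Γ.toModularComplex.G.dist p q ≤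
              Γ.toModularComplex.G.dist p e + Γ.toModularComplex.G.dist e q :=
            Γ.connected.dist_triangle
          have hpe : Γ.toModularComplex.G.dist p e + 1 = Γ.toModularComplex.G.dist p q := by
            omega
          have hlepe : Γ.toModularComplex.le p e :=
            ModularComplex.sm' (Γ.toModularComplex.G.dist p q) rfl h (Γ.sq_le hpq) hpe
          have hsqpe : Γ.sq p e := sq_low hpq hlepe (ModularComplex.le_of_ori h)
          exact M2 ⟨e, hqe, hsqpe, hedist⟩
      -- transport
      have hdcq' : Γ.toModularComplex.G.dist c q' + 1 = Γ.toModularComplex.G.dist p q' := by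
        omega
      exact transport heclaim rfl (Γ.toModularComplex.G.dist p q) p c rfl (Γ.sq_le hpq)
        hpc.symm hcp hdcq' (by omega)

end ExtendedModularComplex

namespace ExtendedModularComplex

variable {Γ : ExtendedModularComplex V}

/-- the sum of component distances -/
noncomputable def dsum (Γ : ExtendedModularComplex V) (a b : {pq : V × V // Γ.sq pq.1 pq.2}) : ℕ :=
  Γ.toModularComplex.G.dist a.1.1 b.1.1 + Γ.toModularComplex.G.dist a.1.2 b.1.2

lemma key (A B : {pq : V × V // Γ.sq pq.1 pq.2}) (hne : A ≠ B) :
    ∃ C, (Γ.subdiv.Adj A C ∧ Γ.dsum C B + 1 = Γ.dsum A B) ∨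
      (Γ.subdiv.Adj C B ∧ Γ.dsum A C + 1 = Γ.dsum A B) := by
  by_contra hno
  push_neg at hno
  obtain ⟨⟨p, q⟩, hpq⟩ := A
  obtain ⟨⟨p', q'⟩, hpq'⟩ := B
  simp only [dsum] at hno
  have M1 : ¬∃ c, Γ.toModularComplex.G.Adj p c ∧ Γ.sq c q ∧
      Γ.toModularComplex.G.dist c p' + 1 = Γ.toModularComplex.G.dist p p' := by
    rintro ⟨c, h1, h2, h3⟩
    obtain ⟨hA, hB⟩ := hno ⟨(c, q), h2⟩
    exact hA (Or.inr ⟨rfl, h1⟩) (by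
      show Γ.toModularComplex.G.dist c p' + Γ.toModularComplex.G.dist q q' + 1 =
        Γ.toModularComplex.G.dist p p' + Γ.toModularComplex.G.dist q q'
      omega)
  have M2 : ¬∃ e, Γ.toModularComplex.G.Adj q e ∧ Γ.sq p e ∧
      Γ.toModularComplex.G.dist e q' + 1 = Γ.toModularComplex.G.dist q q' := by
    rintro ⟨e, h1, h2, h3⟩
    obtain ⟨hA, hB⟩ := hno ⟨(p, e), h2⟩
    exact hA (Or.inl ⟨rfl, h1⟩) (by
      show Γ.toModularComplex.G.dist p p' + Γ.toModularComplex.G.dist e q' + 1 =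
        Γ.toModularComplex.G.dist p p' + Γ.toModularComplex.G.dist q q'
      omega)
  have M3 : ¬∃ c, Γ.toModularComplex.G.Adj p' c ∧ Γ.sq c q' ∧
      Γ.toModularComplex.G.dist c p + 1 = Γ.toModularComplex.G.dist p' p := by
    rintro ⟨c, h1, h2, h3⟩
    obtain ⟨hA, hB⟩ := hno ⟨(c, q'), h2⟩
    have e1 : Γ.toModularComplex.G.dist p c = Γ.toModularComplex.G.dist c p :=
      dc Γ.toModularComplex.G p c
    have e2 : Γ.toModularComplex.G.dist p' p = Γ.toModularComplex.G.dist p p' :=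
      dc Γ.toModularComplex.G p' p
    exact hB (Or.inr ⟨rfl, h1.symm⟩) (by
      show Γ.toModularComplex.G.dist p c + Γ.toModularComplex.G.dist q q' + 1 =
        Γ.toModularComplex.G.dist p p' + Γ.toModularComplex.G.dist q q'
      omega)
  have M4 : ¬∃ e, Γ.toModularComplex.G.Adj q' e ∧ Γ.sq p' e ∧
      Γ.toModularComplex.G.dist e q + 1 = Γ.toModularComplex.G.dist q' q := by
    rintro ⟨e, h1, h2, h3⟩
    obtain ⟨hA, hB⟩ := hno ⟨(p', e), h2⟩
    have e1 : Γ.toModularComplex.G.dist q e = Γ.toModularComplex.G.dist e q :=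
      dc Γ.toModularComplex.G q e
    have e2 : Γ.toModularComplex.G.dist q' q = Γ.toModularComplex.G.dist q q' :=
      dc Γ.toModularComplex.G q' q
    exact hB (Or.inl ⟨rfl, h1.symm⟩) (by
      show Γ.toModularComplex.G.dist p p' + Γ.toModularComplex.G.dist q e + 1 =
        Γ.toModularComplex.G.dist p p' + Γ.toModularComplex.G.dist q q'
      omega)
  obtain ⟨hp, hq⟩ := key_aux hpq hpq' M1 M2 M3 M4
  exact hne (Subtype.ext (Prod.ext hp hq))

lemma upper : ∀ (n : ℕ) (A B : {pq : V × V // Γ.sq pq.1 pq.2}), Γ.dsum A B ≤ n →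
    Γ.subdiv.Reachable A B ∧ Γ.subdiv.dist A B ≤ Γ.dsum A B := by
  intro n
  induction n with
  | zero =>
    intro A B h
    have h1 : Γ.toModularComplex.G.dist A.1.1 B.1.1 = 0 := by
      simp only [dsum] at h; omega
    have h2 : Γ.toModularComplex.G.dist A.1.2 B.1.2 = 0 := by
      simp only [dsum] at h; omega
    have hAB : A = B := by
      apply Subtype.ext
      exact Prod.ext (dist_zero_eq Γ.connected h1) (dist_zero_eq Γ.connected h2)
    subst hAB
    exact ⟨SimpleGraph.Reachable.refl A, by rw [SimpleGraph.dist_self]; exact Nat.zero_le _⟩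
  | succ n IH =>
    intro A B h
    by_cases hAB : A = B
    · subst hAB
      exact ⟨SimpleGraph.Reachable.refl A, by rw [SimpleGraph.dist_self]; exact Nat.zero_le _⟩
    · obtain ⟨C, hC⟩ := key A B hAB
      rcases hC with ⟨hadj, hd⟩ | ⟨hadj, hd⟩
      · obtain ⟨hreach, hdist⟩ := IH C B (by omega)
        obtain ⟨w, hw⟩ := hreach.exists_walk_length_eq_dist
        refine ⟨⟨SimpleGraph.Walk.cons hadj w⟩, ?_⟩
        have := SimpleGraph.dist_le (SimpleGraph.Walk.cons hadj w)
        simp only [SimpleGraph.Walk.length_cons, hw] at this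
        omega
      · obtain ⟨hreach, hdist⟩ := IH A C (by omega)
        obtain ⟨w, hw⟩ := hreach.exists_walk_length_eq_dist
        refine ⟨⟨w.concat hadj⟩, ?_⟩
        have := SimpleGraph.dist_le (w.concat hadj)
        rw [SimpleGraph.Walk.length_concat, hw] at this
        omega

lemma lower {A B : {pq : V × V // Γ.sq pq.1 pq.2}} (w : Γ.subdiv.Walk A B) :
    Γ.dsum A B ≤ w.length := by
  induction w with
  | nil => simp [dsum, SimpleGraph.dist_self]
  | cons hadj w IH =>
    rename_i A C B
    have h1 : Γ.dsum A C = 1 := by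
      rcases hadj with ⟨h1, h2⟩ | ⟨h1, h2⟩
      · simp [dsum, h1, SimpleGraph.dist_self, adj_dist_one h2]
      · simp [dsum, h1, SimpleGraph.dist_self, adj_dist_one h2]
    have htr1 : Γ.toModularComplex.G.dist A.1.1 B.1.1 ≤
        Γ.toModularComplex.G.dist A.1.1 C.1.1 + Γ.toModularComplex.G.dist C.1.1 B.1.1 :=
      Γ.connected.dist_triangle
    have htr2 : Γ.toModularComplex.G.dist A.1.2 B.1.2 ≤
        Γ.toModularComplex.G.dist A.1.2 C.1.2 + Γ.toModularComplex.G.dist C.1.2 B.1.2 :=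
      Γ.connected.dist_triangle
    simp only [dsum, SimpleGraph.Walk.length_cons] at *
    omega

end ExtendedModularComplex

/-- The 2-subdivision graph is connected and its distance is the sum of
componentwise distances. -/
theorem subdiv_connected_and_dist (Γ : ExtendedModularComplex V) :
    Γ.subdiv.Connected ∧
    ∀ a b : {pq : V × V // Γ.sq pq.1 pq.2},
      Γ.subdiv.dist a b = Γ.G.dist a.1.1 b.1.1 + Γ.G.dist a.1.2 b.1.2 := by
  have hconn : Γ.subdiv.Connected := by
    rw [SimpleGraph.connected_iff]
    constructor
    · intro A B
      exact (ExtendedModularComplex.upper (Γ.dsum A B) A B le_rfl).1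
    · obtain ⟨v⟩ := Γ.connected.nonempty
      exact ⟨⟨(v, v), Γ.sq_refl v⟩⟩
  refine ⟨hconn, fun A B => ?_⟩
  have hup := (ExtendedModularComplex.upper (Γ.dsum A B) A B le_rfl).2
  have hlo : Γ.dsum A B ≤ Γ.subdiv.dist A B := by
    obtain ⟨w, hw⟩ := (hconn A B).exists_walk_length_eq_dist
    have := ExtendedModularComplex.lower w
    omega
  have : Γ.subdiv.dist A B = Γ.dsum A B := le_antisymm hup hlo
  simpa [ExtendedModularComplex.dsum] using this


end ZeroExt
end

section
/- Let (Γ,⊑) be an extended modular complex. If (p,p',q',q) is an isometric rectangle and p,q are ◇-neighbors, then p',q' are ◇-neighbors. -/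
namespace ZeroExt

variable {V : Type*}

variable [Fintype V]

/-! ### Section A/B : metric and order basics -/

namespace ModularComplex

variable (Γ : ModularComplex V)

lemma dist_adj {x y : V} (h : Γ.G.Adj x y) : Γ.G.dist x y = 1 :=
  SimpleGraph.dist_eq_one_iff_adj.mpr h

lemma eq_of_dist_zero {x y : V} (h : Γ.G.dist x y = 0) : x = y :=
  (Γ.connected.dist_eq_zero_iff).mp h

lemma dist_ne_of_adj {x y : V} (h : Γ.G.Adj x y) : x ≠ y := h.ne


lemma tri (a b c : V) : Γ.G.dist a c ≤ Γ.G.dist a b + Γ.G.dist b c :=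
  Γ.connected.dist_triangle

lemma dcomm (a b : V) : Γ.G.dist a b = Γ.G.dist b a := SimpleGraph.dist_comm

lemma exists_adj_dist {x y : V} (h : Γ.G.dist x y ≠ 0) :
    ∃ u, Γ.G.Adj x u ∧ Γ.G.dist u y + 1 = Γ.G.dist x y := by
  obtain ⟨w, hw⟩ := Γ.connected.exists_walk_length_eq_dist x y
  cases w with
  | nil => simp at h
  | @cons _ u _ hadj w' =>
    refine ⟨u, hadj, ?_⟩
    have h1 : Γ.G.dist u y ≤ w'.length := SimpleGraph.dist_le w'
    have h2 : Γ.G.dist x y ≤ Γ.G.dist x u + Γ.G.dist u y := Γ.tri x u y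
    have h3 := Γ.dist_adj hadj
    simp only [SimpleGraph.Walk.length_cons] at hw
    omega

lemma parity (w : V) {u v : V} (h : Γ.G.Adj u v) :
    Γ.G.dist w v = Γ.G.dist w u + 1 ∨ Γ.G.dist w u = Γ.G.dist w v + 1 := by
  obtain ⟨m, h1, h2, h3⟩ := Γ.modular u v w
  simp only [interval, Set.mem_setOf_eq] at h1 h2 h3
  have hd := Γ.dist_adj h
  have c1 := Γ.dcomm w v
  have c2 := Γ.dcomm w u
  have c3 := Γ.dcomm u v
  rcases (by omega : Γ.G.dist u m = 0 ∨ Γ.G.dist m v = 0) with h0 | h0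
  · have e : u = m := Γ.eq_of_dist_zero h0
    subst e
    left; omega
  · have e : m = v := Γ.eq_of_dist_zero h0
    subst e
    right; omega

lemma quad {u x y w : V} (hxw : Γ.G.Adj x w) (hyw : Γ.G.Adj y w) (hxy : x ≠ y)
    (hx : Γ.G.dist u x + 1 = Γ.G.dist u w) (hy : Γ.G.dist u y + 1 = Γ.G.dist u w) :
    ∃ z, Γ.G.Adj x z ∧ Γ.G.Adj y z ∧ Γ.G.dist u z + 2 = Γ.G.dist u w := by
  have hxy2 : Γ.G.dist x y = 2 := by
    have h1 := Γ.tri x w y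
    have d1 := Γ.dist_adj hxw
    have d2 := Γ.dist_adj hyw
    have c1 := Γ.dcomm w y
    have c2 := Γ.dcomm u x
    have c3 := Γ.dcomm u y
    have h0 : Γ.G.dist x y ≠ 0 := fun hc => hxy (Γ.eq_of_dist_zero hc)
    have hne1 : Γ.G.dist x y ≠ 1 := by
      intro hc
      have hadj : Γ.G.Adj x y := SimpleGraph.dist_eq_one_iff_adj.mp hc
      rcases Γ.parity u hadj with hp | hp <;> omega
    omega
  obtain ⟨m, h1, h2, h3⟩ := Γ.modular x y u
  simp only [interval, Set.mem_setOf_eq] at h1 h2 h3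
  have c1 := Γ.dcomm u x
  have c2 := Γ.dcomm u y
  have c3 := Γ.dcomm m u
  have c4 := Γ.dcomm m y
  have hmx : Γ.G.dist x m ≠ 0 := by
    intro hc
    have e : x = m := Γ.eq_of_dist_zero hc
    subst e
    omega
  have hmy : Γ.G.dist m y ≠ 0 := by
    intro hc
    have e : m = y := Γ.eq_of_dist_zero hc
    subst e
    omega
  have hx1 : Γ.G.dist x m = 1 := by omega
  have hy1 : Γ.G.dist y m = 1 := by omega
  exact ⟨m, SimpleGraph.dist_eq_one_iff_adj.mp hx1,
    SimpleGraph.dist_eq_one_iff_adj.mp hy1, by omega⟩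

end ModularComplex

/-! ### directed paths -/

inductive OriPath (Γ : ModularComplex V) : V → V → ℕ → Prop
  | refl (x : V) : OriPath Γ x x 0
  | tail {x u v : V} {n : ℕ} : OriPath Γ x u n → Γ.ori u v → OriPath Γ x v (n + 1)

namespace ModularComplex

variable (Γ : ModularComplex V)

lemma oriPath_of_le {x y : V} (h : Γ.le x y) : ∃ n, OriPath Γ x y n := by
  induction h with
  | refl => exact ⟨0, OriPath.refl x⟩
  | tail _ h ih => obtain ⟨n, hn⟩ := ih; exact ⟨n + 1, OriPath.tail hn h⟩

lemma le_of_oriPath {x y : V} {n : ℕ} (h : OriPath Γ x y n) : Γ.le x y := by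
  induction h with
  | refl => exact Relation.ReflTransGen.refl
  | tail _ h ih => exact Relation.ReflTransGen.tail ih h

lemma oriPath_zero {x y : V} (h : OriPath Γ x y 0) : x = y := by
  cases h; rfl

lemma oriPath_append {x y z : V} {m n : ℕ} (h1 : OriPath Γ x y m) (h2 : OriPath Γ y z n) :
    OriPath Γ x z (m + n) := by
  induction h2 with
  | refl => exact h1
  | tail p h ih => exact OriPath.tail ih h

lemma oriPath_head {x y : V} {n : ℕ} (h : OriPath Γ x y (n + 1)) :
    ∃ c, Γ.ori x c ∧ OriPath Γ c y n := by
  induction n generalizing y with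
  | zero =>
    cases h with
    | tail p h => exact ⟨y, by rw [Γ.oriPath_zero p]; exact h, OriPath.refl y⟩
  | succ m ih =>
    cases h with
    | tail p h =>
      obtain ⟨c, hc, hp⟩ := ih p
      exact ⟨c, hc, OriPath.tail hp h⟩


lemma oriPath_tail_inv {x y : V} {n : ℕ} (h : OriPath Γ x y (n + 1)) :
    ∃ u, OriPath Γ x u n ∧ Γ.ori u y := by
  cases h with
  | tail p h => exact ⟨_, p, h⟩

theorem oriPath_dist : ∀ n, ∀ x y : V, OriPath Γ x y n → Γ.G.dist x y = n := by
  intro n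
  induction n using Nat.strong_induction_on with
  | _ n ih =>
  intro x y h
  cases h with
  | refl => simp
  | @tail u yy m p hedge =>
    have hu : Γ.G.dist x u = m := ih m (Nat.lt_succ_self m) x u p
    -- inner descent
    have P : ∀ j, j ≤ m → ∀ c s, OriPath Γ x c j → Γ.ori c s → Γ.G.dist x s + 1 ≠ j := by
      intro j
      induction j using Nat.strong_induction_on with
      | _ j ihj =>
      intro hjm c s hpath hcs habs
      match j, habs with
      | 0, habs => exact absurd habs (by omega)
      | 1, habs =>
        have hs : s = x := (Γ.eq_of_dist_zero (by omega)).symm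
        obtain ⟨c2, hc2, hp2⟩ := Γ.oriPath_head (show OriPath Γ x c (0 + 1) from hpath)
        have e2 : c2 = c := Γ.oriPath_zero hp2
        rw [e2] at hc2
        have hce : x = c := Γ.acyclic (Relation.ReflTransGen.single hc2)
          (Relation.ReflTransGen.single (hs ▸ hcs))
        exact (Γ.ori_adj hc2).ne hce
      | (j' + 2), habs =>
        obtain ⟨c', p', hedge'⟩ := Γ.oriPath_tail_inv (show OriPath Γ x c (j' + 1 + 1) from hpath)
        have hdc' : Γ.G.dist x c' = j' + 1 := ih (j' + 1) (by omega) x c' p'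
        have hdc : Γ.G.dist x c = j' + 2 := ih (j' + 2) (by omega) x c hpath
        have hsc' : s ≠ c' := by
          intro hcc
          subst hcc
          have hce : c = s := Γ.acyclic (Relation.ReflTransGen.single hcs)
            (Relation.ReflTransGen.single hedge')
          exact (Γ.ori_adj hcs).ne hce
        obtain ⟨z, hz1, hz2, hz3⟩ := Γ.quad (u := x) (x := c') (y := s) (w := c)
          (Γ.ori_adj hedge') ((Γ.ori_adj hcs).symm) (Ne.symm hsc')
          (by omega) (by omega)
        have hcyc : IsFourCycle Γ.G c s z c' :=
          ⟨Γ.ori_adj hcs, hz2, hz1.symm, Γ.ori_adj hedge',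
           fun hcz => by rw [← hcz] at hz3; omega, hsc'⟩
        have horiz : Γ.ori c' z := Γ.admissible hcyc hcs
        exact ihj (j' + 1) (by omega) (by omega) c' z p' horiz (by omega)
    -- outer conclusion
    rcases Γ.parity x (Γ.ori_adj hedge) with hp | hp
    · omega
    · exact absurd (by omega : Γ.G.dist x y + 1 = m) (P m le_rfl u y p hedge)

lemma le_dist_add {x z y : V} (h1 : Γ.le x z) (h2 : Γ.le z y) :
    Γ.G.dist x z + Γ.G.dist z y = Γ.G.dist x y := by
  obtain ⟨n1, p1⟩ := Γ.oriPath_of_le h1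
  obtain ⟨n2, p2⟩ := Γ.oriPath_of_le h2
  rw [Γ.oriPath_dist n1 x z p1, Γ.oriPath_dist n2 z y p2,
    Γ.oriPath_dist (n1 + n2) x y (Γ.oriPath_append p1 p2)]

lemma oriPath_dist_of_le {x y : V} (h : Γ.le x y) : OriPath Γ x y (Γ.G.dist x y) := by
  obtain ⟨m, p⟩ := Γ.oriPath_of_le h
  have e := Γ.oriPath_dist m x y p
  rw [e]
  exact p

lemma eq_of_le_dist_zero {x y : V} (h : Γ.le x y) (hd : Γ.G.dist x y = 0) : x = y :=
  Γ.eq_of_dist_zero hd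

lemma ori_of_le_dist_one {x y : V} (h : Γ.le x y) (hd : Γ.G.dist x y = 1) : Γ.ori x y := by
  obtain ⟨n, p⟩ := Γ.oriPath_of_le h
  have hn := Γ.oriPath_dist n x y p
  rw [hd] at hn
  subst hn
  obtain ⟨c, hc, hp⟩ := Γ.oriPath_head p
  rwa [Γ.oriPath_zero hp] at hc

theorem atom_step : ∀ k, ∀ x y x1 : V, Γ.le x y → Γ.G.dist x y = k →
    Γ.G.Adj x x1 → Γ.G.dist x1 y + 1 = k → Γ.ori x x1 ∧ Γ.le x1 y := by
  intro k
  induction k using Nat.strong_induction_on with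
  | _ k ih =>
  intro x y x1 hxy hd hadj hd1
  match k, hd, hd1 with
  | 1, hd, hd1 =>
    have hx1y : x1 = y := Γ.eq_of_dist_zero (by omega)
    subst hx1y
    exact ⟨Γ.ori_of_le_dist_one hxy hd, Relation.ReflTransGen.refl⟩
  | (k' + 2), hd, hd1 =>
    have p := Γ.oriPath_dist_of_le hxy
    rw [hd] at p
    obtain ⟨c1, hc1, hp1⟩ := Γ.oriPath_head (show OriPath Γ x y (k' + 1 + 1) from p)
    have hld : Γ.G.dist c1 y = k' + 1 := Γ.oriPath_dist _ _ _ hp1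
    have hlec1 : Γ.le c1 y := Γ.le_of_oriPath hp1
    by_cases hx1c : x1 = c1
    · subst hx1c
      exact ⟨hc1, hlec1⟩
    · have cy1 := Γ.dcomm y x1
      have cy2 := Γ.dcomm y c1
      have cy3 := Γ.dcomm y x
      obtain ⟨z, hz1, hz2, hz3⟩ := Γ.quad (u := y) (x := x1) (y := c1) (w := x)
        hadj.symm (Γ.ori_adj hc1).symm hx1c (by omega) (by omega)
      have cy4 := Γ.dcomm y z
      obtain ⟨horicz, hlez⟩ := ih (k' + 1) (by omega) c1 y z hlec1 hld hz2 (by omega)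
      have hcyc : IsFourCycle Γ.G x c1 z x1 :=
        ⟨Γ.ori_adj hc1, hz2, hz1.symm, hadj.symm,
         fun hxz => by rw [← hxz] at hz3; omega, Ne.symm hx1c⟩
      have horix1z : Γ.ori x1 z := Γ.admissible hcyc hc1
      rcases Γ.ori_total hadj with ho | ho
      · exact ⟨ho, Relation.ReflTransGen.head horix1z hlez⟩
      · exfalso
        have p3 : OriPath Γ x1 z 3 :=
          OriPath.tail (OriPath.tail (OriPath.tail (OriPath.refl x1) ho) hc1) horicz
        have e3 := Γ.oriPath_dist 3 x1 z p3
        have e1 := Γ.dist_adj (Γ.ori_adj horix1z)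
        omega

theorem le_interval : ∀ k, ∀ x z y : V, Γ.le x y → Γ.G.dist x z = k →
    Γ.G.dist x z + Γ.G.dist z y = Γ.G.dist x y → Γ.le x z ∧ Γ.le z y := by
  intro k
  induction k using Nat.strong_induction_on with
  | _ k ih =>
  intro x z y hxy hd hint
  match k, hd with
  | 0, hd =>
    have hxz : x = z := Γ.eq_of_dist_zero hd
    subst hxz
    exact ⟨Relation.ReflTransGen.refl, hxy⟩
  | (k' + 1), hd =>
    obtain ⟨x1, hadj, hd1⟩ := Γ.exists_adj_dist (x := x) (y := z) (by omega)
    have h1y : Γ.G.dist x1 y + 1 = Γ.G.dist x y := by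
      have t1 := Γ.tri x1 z y
      have t2 := Γ.tri x x1 y
      have e := Γ.dist_adj hadj
      omega
    obtain ⟨hori, hle1⟩ := Γ.atom_step (Γ.G.dist x y) x y x1 hxy rfl hadj h1y
    have ihr := ih k' (by omega) x1 z y hle1 (by omega) (by omega)
    exact ⟨Relation.ReflTransGen.head hori ihr.1, ihr.2⟩

/-- mem of interval for comparable endpoints gives order betweenness. -/
lemma le_interval' {x z y : V} (hxy : Γ.le x y)
    (hint : Γ.G.dist x z + Γ.G.dist z y = Γ.G.dist x y) : Γ.le x z ∧ Γ.le z y :=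
  Γ.le_interval (Γ.G.dist x z) x z y hxy rfl hint

theorem down_step : ∀ k, ∀ q z1 z2 w1 : V, Γ.le q z1 → Γ.le q z2 → Γ.G.dist q z1 = k →
    Γ.G.Adj z1 w1 → Γ.G.dist w1 z2 + 1 = Γ.G.dist z1 z2 → Γ.le q w1 := by
  intro k
  induction k using Nat.strong_induction_on with
  | _ k ih =>
  intro q z1 z2 w1 h1 h2 hk hadj hw
  by_cases hD1 : Γ.G.dist z1 z2 = 1
  · have hwz : w1 = z2 := Γ.eq_of_dist_zero (by omega)
    subst hwz
    exact h2
  have hD2 : 2 ≤ Γ.G.dist z1 z2 := by omega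
  obtain ⟨v, hv1, hv2, hv3⟩ := Γ.modular z1 z2 q
  simp only [interval, Set.mem_setOf_eq] at hv1 hv2 hv3
  have hqv1 : Γ.G.dist q v + Γ.G.dist v z1 = Γ.G.dist q z1 := by
    have c1 := Γ.dcomm z1 v
    have c2 := Γ.dcomm z1 q
    have c3 := Γ.dcomm v q
    omega
  obtain ⟨hlqv, hlvz1⟩ := Γ.le_interval' h1 hqv1
  have hqv2 : Γ.G.dist q v + Γ.G.dist v z2 = Γ.G.dist q z2 := by
    have c1 := Γ.dcomm z2 v
    have c2 := Γ.dcomm z2 q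
    have c3 := Γ.dcomm v q
    omega
  obtain ⟨hlqv', hlvz2⟩ := Γ.le_interval' h2 hqv2
  by_cases hvz : v = z1
  · subst hvz
    have hm : Γ.G.dist v w1 + Γ.G.dist w1 z2 = Γ.G.dist v z2 := by
      have e := Γ.dist_adj hadj
      omega
    exact hlqv.trans (Γ.le_interval' hlvz2 hm).1
  have he : Γ.G.dist z1 v ≠ 0 := fun h0 => hvz (Γ.eq_of_dist_zero h0).symm
  obtain ⟨v1, hadj2, hdv1⟩ := Γ.exists_adj_dist (x := z1) (y := v) he
  have hv1m : Γ.G.dist v v1 + Γ.G.dist v1 z1 = Γ.G.dist v z1 := by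
    have c1 := Γ.dcomm v1 v
    have c2 := Γ.dcomm z1 v
    have e := Γ.dist_adj hadj2
    have c3 := Γ.dcomm z1 v1
    omega
  obtain ⟨hlvv1, hlv1z1⟩ := Γ.le_interval' hlvz1 hv1m
  have horiv1 : Γ.ori v1 z1 := Γ.ori_of_le_dist_one hlv1z1
    (by rw [Γ.dcomm v1 z1]; exact Γ.dist_adj hadj2)
  have hqv1d : Γ.G.dist q v1 + Γ.G.dist v1 z1 = Γ.G.dist q z1 := by
    have e1 := Γ.le_dist_add hlqv hlvv1
    omega
  have hv1i : Γ.G.dist v1 z2 + 1 = Γ.G.dist z1 z2 := by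
    have t1 := Γ.tri v1 v z2
    have t2 := Γ.tri z1 v1 z2
    have e := Γ.dist_adj hadj2
    have c1 := Γ.dcomm v1 v
    omega
  by_cases hv1w : v1 = w1
  · subst hv1w
    exact hlqv.trans hlvv1
  · have c1 := Γ.dcomm z2 v1
    have c2 := Γ.dcomm z2 w1
    have c3 := Γ.dcomm z2 z1
    obtain ⟨ss, hs1, hs2, hs3⟩ := Γ.quad (u := z2) (x := v1) (y := w1) (w := z1)
      hadj2.symm hadj.symm hv1w (by omega) (by omega)
    have c4 := Γ.dcomm z2 ss
    have hlqs : Γ.le q ss := ih (Γ.G.dist q v1) (by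
        have e := Γ.dist_adj hadj2
        have c5 := Γ.dcomm z1 v1
        omega) q v1 z2 ss (hlqv.trans hlvv1) h2 rfl hs1 (by omega)
    have hcyc : IsFourCycle Γ.G v1 z1 w1 ss :=
      ⟨hadj2.symm, hadj, hs2, hs1.symm,
       hv1w, fun hz1s => by rw [← hz1s] at hs3; omega⟩
    have horis : Γ.ori ss w1 := Γ.admissible hcyc horiv1
    exact hlqs.tail horis

theorem ub_convex : ∀ t, ∀ q z1 z2 z : V, Γ.le q z1 → Γ.le q z2 → Γ.G.dist z1 z = t →
    Γ.G.dist z1 z + Γ.G.dist z z2 = Γ.G.dist z1 z2 → Γ.le q z := by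
  intro t
  induction t using Nat.strong_induction_on with
  | _ t ih =>
  intro q z1 z2 z h1 h2 ht hint
  match t, ht with
  | 0, ht =>
    have e : z1 = z := Γ.eq_of_dist_zero ht
    rw [← e]
    exact h1
  | (t' + 1), ht =>
    obtain ⟨w1, hadj, hd1⟩ := Γ.exists_adj_dist (x := z1) (y := z) (by omega)
    have hw1i : Γ.G.dist w1 z2 + 1 = Γ.G.dist z1 z2 := by
      have t1 := Γ.tri w1 z z2
      have t2 := Γ.tri z1 w1 z2
      have e := Γ.dist_adj hadj
      omega
    have hlqw1 : Γ.le q w1 := Γ.down_step (Γ.G.dist q z1) q z1 z2 w1 h1 h2 rfl hadj hw1i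
    exact ih t' (by omega) q w1 z2 z hlqw1 h2 (by omega) (by omega)

theorem join_exists {p q x : V} (hp : Γ.le p x) (hq : Γ.le q x) :
    ∃ j, Γ.IsJoin p q j := by
  classical
  let S : Finset V := Finset.univ.filter (fun z => Γ.le p z ∧ Γ.le q z)
  have hxS : x ∈ S := by simp [S, hp, hq]
  obtain ⟨j, hjS, hjmin⟩ := S.exists_min_image (fun z => Γ.G.dist p z) ⟨x, hxS⟩
  simp only [S, Finset.mem_filter, Finset.mem_univ, true_and] at hjS
  refine ⟨j, hjS.1, hjS.2, ?_⟩
  intro z hpz hqz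
  obtain ⟨m, hm1, hm2, hm3⟩ := Γ.modular j z p
  simp only [interval, Set.mem_setOf_eq] at hm1 hm2 hm3
  have e1 : Γ.G.dist p m + Γ.G.dist m j = Γ.G.dist p j := by
    have c1 := Γ.dcomm j m
    have c2 := Γ.dcomm j p
    have c3 := Γ.dcomm m p
    omega
  obtain ⟨hlpm, hlmj⟩ := Γ.le_interval' hjS.1 e1
  have e2 : Γ.G.dist p m + Γ.G.dist m z = Γ.G.dist p z := by
    have c1 := Γ.dcomm z m
    have c2 := Γ.dcomm z p
    have c3 := Γ.dcomm m p
    omega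
  obtain ⟨hlpm', hlmz⟩ := Γ.le_interval' hpz e2
  have hlqm : Γ.le q m := Γ.ub_convex (Γ.G.dist j m) q j z m hjS.2 hqz rfl hm1
  have hmS : m ∈ S := by simp [S, hlpm, hlqm]
  have hmin := hjmin m hmS
  have hadd := Γ.le_dist_add hlpm hlmj
  have hmj : m = j := Γ.eq_of_dist_zero (by omega)
  rw [← hmj]
  exact hlmz

end ModularComplex

/-! ### opposite complex -/

def ModularComplex.op (Γ : ModularComplex V) : ModularComplex V where
  G := Γ.G
  connected := Γ.connected
  modular := Γ.modular
  ori x y := Γ.ori y x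
  ori_adj h := (Γ.ori_adj h).symm
  ori_total h := (Γ.ori_total h).symm
  acyclic h1 h2 := (Γ.acyclic (Relation.reflTransGen_swap.mp h1)
    (Relation.reflTransGen_swap.mp h2)).symm
  admissible := by
    intro x1 x2 x3 x4 hc h
    obtain ⟨a12, a23, a34, a41, ne13, ne24⟩ := hc
    exact Γ.admissible (x1 := x2) (x2 := x1) (x3 := x4) (x4 := x3)
      ⟨a12.symm, a41.symm, a34.symm, a23.symm, ne24, ne13⟩ h

namespace ModularComplex

variable (Γ : ModularComplex V)

lemma op_le {x y : V} : (Γ.op).le x y ↔ Γ.le y x :=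
  Relation.reflTransGen_swap

lemma isMeet_op_iff {p q m : V} : (Γ.op).IsMeet p q m ↔ Γ.IsJoin p q m := by
  constructor
  · rintro ⟨h1, h2, h3⟩
    exact ⟨Γ.op_le.mp h1, Γ.op_le.mp h2,
      fun x hx1 hx2 => Γ.op_le.mp (h3 x (Γ.op_le.mpr hx1) (Γ.op_le.mpr hx2))⟩
  · rintro ⟨h1, h2, h3⟩
    exact ⟨Γ.op_le.mpr h1, Γ.op_le.mpr h2,
      fun x hx1 hx2 => Γ.op_le.mpr (h3 x (Γ.op_le.mp hx1) (Γ.op_le.mp hx2))⟩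

lemma isJoin_op_iff {p q j : V} : (Γ.op).IsJoin p q j ↔ Γ.IsMeet p q j := by
  constructor
  · rintro ⟨h1, h2, h3⟩
    exact ⟨Γ.op_le.mp h1, Γ.op_le.mp h2,
      fun x hx1 hx2 => Γ.op_le.mp (h3 x (Γ.op_le.mpr hx1) (Γ.op_le.mpr hx2))⟩
  · rintro ⟨h1, h2, h3⟩
    exact ⟨Γ.op_le.mpr h1, Γ.op_le.mpr h2,
      fun x hx1 hx2 => Γ.op_le.mpr (h3 x (Γ.op_le.mp hx1) (Γ.op_le.mp hx2))⟩

theorem meet_exists {p q x : V} (hp : Γ.le x p) (hq : Γ.le x q) :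
    ∃ m, Γ.IsMeet p q m := by
  obtain ⟨j, hj⟩ := (Γ.op).join_exists (p := p) (q := q) (x := x)
    (Γ.op_le.mpr hp) (Γ.op_le.mpr hq)
  exact ⟨j, (Γ.isJoin_op_iff).mp hj⟩

theorem meet_interval {p q m : V} (h : Γ.IsMeet p q m) :
    Γ.G.dist p m + Γ.G.dist m q = Γ.G.dist p q := by
  obtain ⟨s, hs1, hs2, hs3⟩ := Γ.modular p q m
  simp only [interval, Set.mem_setOf_eq] at hs1 hs2 hs3
  have e1 : Γ.G.dist m s + Γ.G.dist s p = Γ.G.dist m p := by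
    have c1 := Γ.dcomm p s
    have c2 := Γ.dcomm p m
    have c3 := Γ.dcomm s m
    omega
  obtain ⟨hlms, hlsp⟩ := Γ.le_interval' h.1 e1
  have e2 : Γ.G.dist m s + Γ.G.dist s q = Γ.G.dist m q := by
    have c1 := Γ.dcomm q s
    have c2 := Γ.dcomm q m
    have c3 := Γ.dcomm s m
    omega
  obtain ⟨hlms', hlsq⟩ := Γ.le_interval' h.2.1 e2
  have hsm : Γ.le s m := h.2.2 s hlsp hlsq
  have e : m = s := Γ.acyclic hlms hsm
  rw [e]
  have c1 := Γ.dcomm q s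
  omega

lemma rect_rotate {a b c d : V} (h : IsoRect Γ.G a b c d) : IsoRect Γ.G b c d a :=
  ⟨h.2.1, h.2.2.1, h.2.2.2, h.1⟩

lemma rect_reflect {a b c d : V} (h : IsoRect Γ.G a b c d) : IsoRect Γ.G a d c b := by
  obtain ⟨h1, h2, h3, h4⟩ := h
  unfold ShortestTriple at h1 h2 h3 h4
  have c1 := Γ.dcomm a b
  have c2 := Γ.dcomm b c
  have c3 := Γ.dcomm c d
  have c4 := Γ.dcomm d a
  have c5 := Γ.dcomm a c
  have c6 := Γ.dcomm b d
  exact ⟨(by omega : Γ.G.dist b a + Γ.G.dist a d = Γ.G.dist b d),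
    (by omega : Γ.G.dist a d + Γ.G.dist d c = Γ.G.dist a c),
    (by omega : Γ.G.dist d c + Γ.G.dist c b = Γ.G.dist d b),
    (by omega : Γ.G.dist c b + Γ.G.dist b a = Γ.G.dist c a)⟩

lemma rect_sides {a b c d : V} (h : IsoRect Γ.G a b c d) :
    Γ.G.dist a b = Γ.G.dist d c ∧ Γ.G.dist b c = Γ.G.dist a d ∧
    Γ.G.dist a c = Γ.G.dist a b + Γ.G.dist b c ∧
    Γ.G.dist b d = Γ.G.dist a b + Γ.G.dist b c := by
  obtain ⟨h1, h2, h3, h4⟩ := h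
  unfold ShortestTriple at h1 h2 h3 h4
  have c1 := Γ.dcomm a b
  have c2 := Γ.dcomm b c
  have c3 := Γ.dcomm c d
  have c4 := Γ.dcomm d a
  have c5 := Γ.dcomm a c
  have c6 := Γ.dcomm b d
  exact ⟨by omega, by omega, by omega, by omega⟩

lemma rect_split {x1 x2 x3 x4 u : V} (h : IsoRect Γ.G x1 x2 x3 x4) (hadj : Γ.G.Adj x1 u)
    (hu : Γ.G.dist u x2 + 1 = Γ.G.dist x1 x2) :
    ∃ w, Γ.G.Adj x4 w ∧ Γ.G.dist u w = Γ.G.dist x1 x4 ∧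
      IsoRect Γ.G x1 u w x4 ∧ IsoRect Γ.G u x2 x3 w := by
  obtain ⟨h1, h2, h3, h4⟩ := h
  unfold ShortestTriple at h1 h2 h3 h4
  have e_adj := Γ.dist_adj hadj
  obtain ⟨w, hw1, hw2, hw3⟩ := Γ.modular x4 x3 u
  simp only [interval, Set.mem_setOf_eq] at hw1 hw2 hw3
  have t1 := Γ.tri x4 x1 u
  have t2 := Γ.tri x4 u x2
  have t3 := Γ.tri u x2 x3
  have t4 := Γ.tri x1 u x3
  have t5 := Γ.tri x1 u w
  have t6 := Γ.tri x1 w x3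
  have t7 := Γ.tri x4 w x2
  have t8 := Γ.tri w u x2
  have c1 := Γ.dcomm x2 x4
  have c2 := Γ.dcomm x3 x1
  have c3 := Γ.dcomm x3 u
  have c4 := Γ.dcomm x3 w
  have c5 := Γ.dcomm u w
  have c6 := Γ.dcomm x4 x3
  have c7 := Γ.dcomm x1 u
  have c8 := Γ.dcomm x4 w
  have c9 := Γ.dcomm x1 w
  have c10 := Γ.dcomm x4 u
  have c11 := Γ.dcomm x1 x4
  have c12 := Γ.dcomm x2 w
  have c13 := Γ.dcomm x2 u
  have c14 := Γ.dcomm x2 x3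
  have hx4w : Γ.G.dist x4 w = 1 := by omega
  refine ⟨w, SimpleGraph.dist_eq_one_iff_adj.mp hx4w, by omega, ?_, ?_⟩
  · exact ⟨(by omega : Γ.G.dist x4 x1 + Γ.G.dist x1 u = Γ.G.dist x4 u),
      (by omega : Γ.G.dist x1 u + Γ.G.dist u w = Γ.G.dist x1 w),
      (by omega : Γ.G.dist u w + Γ.G.dist w x4 = Γ.G.dist u x4),
      (by omega : Γ.G.dist w x4 + Γ.G.dist x4 x1 = Γ.G.dist w x1)⟩
  · exact ⟨(by omega : Γ.G.dist w u + Γ.G.dist u x2 = Γ.G.dist w x2),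
      (by omega : Γ.G.dist u x2 + Γ.G.dist x2 x3 = Γ.G.dist u x3),
      (by omega : Γ.G.dist x2 x3 + Γ.G.dist x3 w = Γ.G.dist x2 w),
      (by omega : Γ.G.dist x3 w + Γ.G.dist w u = Γ.G.dist x3 u)⟩

lemma adj_of_dist_one {x y : V} (h : Γ.G.dist x y = 1) : Γ.G.Adj x y :=
  SimpleGraph.dist_eq_one_iff_adj.mp h

lemma ne_of_dist_two {x y : V} (h : Γ.G.dist x y = 2) : x ≠ y := by
  intro e
  subst e
  rw [SimpleGraph.dist_self] at h
  omega

/-- split off a unit ladder square, with all the data needed for transfers. -/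
lemma rect_split' {p p' q' q u : V} (hrect : IsoRect Γ.G p p' q' q)
    (hunit : Γ.G.dist p p' = 1) (hadj : Γ.G.Adj p u) (hu : Γ.G.dist u q + 1 = Γ.G.dist p q) :
    ∃ w, Γ.G.Adj p' w ∧ Γ.G.dist u w = 1 ∧ IsoRect Γ.G u w q' q ∧
      IsFourCycle Γ.G p p' w u ∧ IsFourCycle Γ.G p u w p' ∧ IsFourCycle Γ.G u p p' w := by
  obtain ⟨w, hw1, hw2, hw3, hw4⟩ := Γ.rect_split (Γ.rect_reflect hrect) hadj hu
  rw [hunit] at hw2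
  obtain ⟨r1, r2, r3, r4⟩ := hw3
  unfold ShortestTriple at r1 r2 r3 r4
  have e1 := Γ.dist_adj hadj
  have hpw : Γ.G.dist p w = 2 := by omega
  have hup' : Γ.G.dist u p' = 2 := by
    have e2 := Γ.dist_adj hw1
    have c1 := Γ.dcomm w p'
    omega
  have hadjwu : Γ.G.Adj w u := Γ.adj_of_dist_one (by rw [Γ.dcomm w u]; exact hw2)
  have hadjpp' : Γ.G.Adj p p' := Γ.adj_of_dist_one hunit
  refine ⟨w, hw1, hw2, Γ.rect_reflect hw4, ?_, ?_, ?_⟩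
  · exact ⟨hadjpp', hw1, hadjwu, hadj.symm, Γ.ne_of_dist_two hpw,
      fun e => (Γ.ne_of_dist_two hup') e.symm⟩
  · exact ⟨hadj, hadjwu.symm, hw1.symm, hadjpp'.symm, Γ.ne_of_dist_two hpw,
      Γ.ne_of_dist_two hup'⟩
  · exact ⟨hadj.symm, hadjpp', hw1, hadjwu, Γ.ne_of_dist_two hup',
      Γ.ne_of_dist_two hpw⟩

theorem rect_transfer : ∀ k, ∀ p p' q' q : V, IsoRect Γ.G p p' q' q → Γ.G.dist p p' = 1 →
    Γ.ori p p' → Γ.G.dist p q = k → Γ.ori q q' := by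
  intro k
  induction k using Nat.strong_induction_on with
  | _ k ih =>
  intro p p' q' q hrect hunit hori hk
  obtain ⟨s1, s2, s3, s4⟩ := Γ.rect_sides hrect
  match k, hk with
  | 0, hk =>
    have e1 : p = q := Γ.eq_of_dist_zero hk
    have e2 : p' = q' := Γ.eq_of_dist_zero (by omega)
    rw [← e1, ← e2]
    exact hori
  | (k' + 1), hk =>
    obtain ⟨u, hadj, hd⟩ := Γ.exists_adj_dist (x := p) (y := q) (by omega)
    obtain ⟨w, hw1, hw2, hw3, hc1, hc2, hc3⟩ := Γ.rect_split' hrect hunit hadj hd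
    have horiuw : Γ.ori u w := Γ.admissible hc1 hori
    exact ih k' (by omega) u w q' q hw3 hw2 horiuw (by omega)

theorem rect_climb : ∀ k, ∀ x x' q' q : V, IsoRect Γ.G x x' q' q → Γ.G.dist x x' = 1 →
    Γ.ori x x' → Γ.le x q → Γ.G.dist x q = k → Γ.le x' q' := by
  intro k
  induction k using Nat.strong_induction_on with
  | _ k ih =>
  intro x x' q' q hrect hunit hori hle hk
  obtain ⟨s1, s2, s3, s4⟩ := Γ.rect_sides hrect
  match k, hk with
  | 0, hk =>
    have e2 : x' = q' := Γ.eq_of_dist_zero (by omega)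
    rw [← e2]
    exact Relation.ReflTransGen.refl
  | (k' + 1), hk =>
    have p := Γ.oriPath_dist_of_le hle
    rw [hk] at p
    obtain ⟨u, horixu, hpu⟩ := Γ.oriPath_head (show OriPath Γ x q (k' + 1) from p)
    have hdu : Γ.G.dist u q = k' := Γ.oriPath_dist _ _ _ hpu
    obtain ⟨w, hw1, hw2, hw3, hc1, hc2, hc3⟩ := Γ.rect_split' hrect hunit
      (Γ.ori_adj horixu) (by omega)
    have horiuw : Γ.ori u w := Γ.admissible hc1 hori
    have horix'w : Γ.ori x' w := Γ.admissible hc2 horixu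
    exact Relation.ReflTransGen.head horix'w
      (ih k' (by omega) u w q' q hw3 hw2 horiuw (Γ.le_of_oriPath hpu) hdu)

theorem rect_dclimb : ∀ k, ∀ x x' q' q : V, IsoRect Γ.G x x' q' q → Γ.G.dist x x' = 1 →
    Γ.ori x x' → Γ.le q x → Γ.G.dist q x = k → Γ.le q' x' := by
  intro k
  induction k using Nat.strong_induction_on with
  | _ k ih =>
  intro x x' q' q hrect hunit hori hle hk
  obtain ⟨s1, s2, s3, s4⟩ := Γ.rect_sides hrect
  match k, hk with
  | 0, hk =>
    have e1 : q = x := Γ.eq_of_dist_zero hk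
    have e2 : x' = q' := Γ.eq_of_dist_zero (by rw [Γ.dcomm q x] at hk; omega)
    rw [← e2]
    exact Relation.ReflTransGen.refl
  | (k' + 1), hk =>
    have p := Γ.oriPath_dist_of_le hle
    rw [hk] at p
    obtain ⟨u, hpu, horiux⟩ := Γ.oriPath_tail_inv (show OriPath Γ q x (k' + 1) from p)
    have hdu : Γ.G.dist q u = k' := Γ.oriPath_dist _ _ _ hpu
    have hduq : Γ.G.dist u q + 1 = Γ.G.dist x q := by
      have e := Γ.le_dist_add (Γ.le_of_oriPath hpu) (Relation.ReflTransGen.single horiux)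
      have c1 := Γ.dcomm q u
      have c2 := Γ.dcomm q x
      have c3 := Γ.dcomm u q
      have e2 := Γ.dist_adj (Γ.ori_adj horiux)
      omega
    obtain ⟨w, hw1, hw2, hw3, hc1, hc2, hc3⟩ := Γ.rect_split' hrect hunit
      ((Γ.ori_adj horiux).symm) hduq
    have horiuw : Γ.ori u w := Γ.admissible hc1 hori
    have horiwx' : Γ.ori w x' := Γ.admissible hc3 horiux
    exact Relation.ReflTransGen.tail
      (ih k' (by omega) u w q' q hw3 hw2 horiuw (Γ.le_of_oriPath hpu) hdu) horiwx'

theorem rect_raise : ∀ r, ∀ p p' q' q m : V, IsoRect Γ.G p p' q' q → Γ.G.dist p p' = 1 →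
    Γ.ori p p' → Γ.le m p → Γ.G.dist m p = r →
    Γ.G.dist p m + Γ.G.dist m q = Γ.G.dist p q →
    ∃ ms, Γ.ori m ms ∧ Γ.le ms p' ∧ IsoRect Γ.G m ms q' q ∧ Γ.G.dist m ms = 1 := by
  intro r
  induction r using Nat.strong_induction_on with
  | _ r ih =>
  intro p p' q' q m hrect hunit hori hle hr hint
  match r, hr with
  | 0, hr =>
    have e : m = p := Γ.eq_of_dist_zero hr
    subst e
    exact ⟨p', hori, Relation.ReflTransGen.refl, hrect, hunit⟩
  | (r' + 1), hr =>
    have pth := Γ.oriPath_dist_of_le hle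
    rw [hr] at pth
    obtain ⟨u, hpu, horiup⟩ := Γ.oriPath_tail_inv (show OriPath Γ m p (r' + 1) from pth)
    have hdmu : Γ.G.dist m u = r' := Γ.oriPath_dist _ _ _ hpu
    have e1 := Γ.dist_adj (Γ.ori_adj horiup)
    have hduq : Γ.G.dist u q + 1 = Γ.G.dist p q := by
      have t1 := Γ.tri u m q
      have t2 := Γ.tri p u q
      have c1 := Γ.dcomm m u
      have c2 := Γ.dcomm p u
      have c3 := Γ.dcomm p m
      omega
    have hintu : Γ.G.dist u m + Γ.G.dist m q = Γ.G.dist u q := by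
      have c1 := Γ.dcomm m u
      have c3 := Γ.dcomm p m
      omega
    obtain ⟨w, hw1, hw2, hw3, hc1, hc2, hc3⟩ := Γ.rect_split' hrect hunit
      ((Γ.ori_adj horiup).symm) hduq
    have horiuw : Γ.ori u w := Γ.admissible hc1 hori
    have horiwp' : Γ.ori w p' := Γ.admissible hc3 horiup
    obtain ⟨ms, hms1, hms2, hms3, hms4⟩ := ih r' (by omega) u w q' q m hw3 hw2 horiuw
      (Γ.le_of_oriPath hpu) hdmu hintu
    exact ⟨ms, hms1, hms2.tail horiwp', hms3, hms4⟩

theorem rect_draise : ∀ r, ∀ p p' q' q c : V, IsoRect Γ.G p p' q' q → Γ.G.dist p p' = 1 →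
    Γ.ori p p' → Γ.le p c → Γ.G.dist p c = r →
    Γ.G.dist p c + Γ.G.dist c q = Γ.G.dist p q →
    ∃ cs, Γ.ori c cs ∧ Γ.le p' cs ∧ IsoRect Γ.G c cs q' q ∧ Γ.G.dist c cs = 1 := by
  intro r
  induction r using Nat.strong_induction_on with
  | _ r ih =>
  intro p p' q' q c hrect hunit hori hle hr hint
  match r, hr with
  | 0, hr =>
    have e : p = c := Γ.eq_of_dist_zero hr
    rw [← e]
    exact ⟨p', hori, Relation.ReflTransGen.refl, hrect, hunit⟩
  | (r' + 1), hr =>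
    have pth := Γ.oriPath_dist_of_le hle
    rw [hr] at pth
    obtain ⟨u, horipu, hpu⟩ := Γ.oriPath_head (show OriPath Γ p c (r' + 1) from pth)
    have hduc : Γ.G.dist u c = r' := Γ.oriPath_dist _ _ _ hpu
    have e1 := Γ.dist_adj (Γ.ori_adj horipu)
    have hduq : Γ.G.dist u q + 1 = Γ.G.dist p q := by
      have t1 := Γ.tri u c q
      have t2 := Γ.tri p u q
      omega
    have hintu : Γ.G.dist u c + Γ.G.dist c q = Γ.G.dist u q := by omega
    obtain ⟨w, hw1, hw2, hw3, hc1, hc2, hc3⟩ := Γ.rect_split' hrect hunit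
      (Γ.ori_adj horipu) hduq
    have horiuw : Γ.ori u w := Γ.admissible hc1 hori
    have horip'w : Γ.ori p' w := Γ.admissible hc2 horipu
    obtain ⟨cs, hcs1, hcs2, hcs3, hcs4⟩ := ih r' (by omega) u w q' q c hw3 hw2 horiuw
      (Γ.le_of_oriPath hpu) hduc hintu
    exact ⟨cs, hcs1, Relation.ReflTransGen.head horip'w hcs2, hcs3, hcs4⟩

theorem join_interval {p q j : V} (h : Γ.IsJoin p q j) :
    Γ.G.dist p j + Γ.G.dist j q = Γ.G.dist p q :=
  (Γ.op).meet_interval ((Γ.isMeet_op_iff).mpr h)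

end ModularComplex


namespace ExtendedModularComplex

variable (Γ : ExtendedModularComplex V)

def op (Γ : ExtendedModularComplex V) : ExtendedModularComplex V where
  toModularComplex := Γ.toModularComplex.op
  sq x y := Γ.sq y x
  sq_le h := (Γ.toModularComplex.op_le).mpr (Γ.sq_le h)
  sq_refl p := Γ.sq_refl p
  sq_edge h := Γ.sq_edge h
  sq_interval := by
    intro p q a b hpq hab ha hb
    obtain ⟨ha1, ha2⟩ := ha
    obtain ⟨hb1, hb2⟩ := hb
    exact Γ.sq_interval hpq ((Γ.toModularComplex.op_le).mp hab)
      ⟨(Γ.toModularComplex.op_le).mp hb2, (Γ.toModularComplex.op_le).mp hb1⟩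
      ⟨(Γ.toModularComplex.op_le).mp ha2, (Γ.toModularComplex.op_le).mp ha1⟩
  sq_join := by
    intro p q1 q2 j h1 h2 hj
    exact Γ.sq_meet h1 h2 ((Γ.toModularComplex.isJoin_op_iff).mp hj)
  sq_meet := by
    intro p1 p2 q m h1 h2 hm
    exact Γ.sq_join h1 h2 ((Γ.toModularComplex.isMeet_op_iff).mp hm)

theorem sq_meet_raised {a b p p' q' q m ms : V}
    (hab : Γ.sq a b) (hpa : Γ.toModularComplex.le a p) (hpb : Γ.toModularComplex.le p b)
    (hqa : Γ.toModularComplex.le a q)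
    (hrect : IsoRect Γ.G p p' q' q) (hunit : Γ.G.dist p p' = 1) (hori : Γ.ori p p')
    (horiq : Γ.ori q q') (hm : Γ.toModularComplex.IsMeet p q m)
    (hms_ori : Γ.ori m ms) (hms_p' : Γ.toModularComplex.le ms p')
    (hms_q' : Γ.toModularComplex.le ms q') :
    Γ.sq m p' := by
  have hmq' : Γ.toModularComplex.le m q' := hm.2.1.tail horiq
  obtain ⟨w', hw'⟩ := Γ.toModularComplex.meet_exists (p := p) (q := q') (x := m) hm.1 hmq'
  have hmw' : Γ.toModularComplex.le m w' := hw'.2.2 m hm.1 hmq'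
  -- distance bookkeeping to show w' = m
  have hwint := Γ.toModularComplex.meet_interval hw'
  have hmint := Γ.toModularComplex.meet_interval hm
  obtain ⟨s1, s2, s3, s4⟩ := Γ.toModularComplex.rect_sides hrect
  have eA := Γ.toModularComplex.le_dist_add hmw' hw'.1
  have eB := Γ.toModularComplex.le_dist_add hmw' hw'.2.1
  have eC := Γ.toModularComplex.le_dist_add hm.2.1
    (Relation.ReflTransGen.single horiq)
  have eD := Γ.toModularComplex.dist_adj (Γ.ori_adj horiq)
  have c1 := Γ.toModularComplex.dcomm p m
  have c2 := Γ.toModularComplex.dcomm p w'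
  have hw0 : Γ.G.dist m w' = 0 := by omega
  have ew : m = w' := Γ.toModularComplex.eq_of_dist_zero hw0
  -- ms is not below p
  have hnot : ¬ Γ.toModularComplex.le ms p := by
    intro hcon
    have hlem : Γ.toModularComplex.le ms m := by
      rw [ew]
      exact hw'.2.2 ms hcon hms_q'
    have : m = ms := Γ.toModularComplex.acyclic (Relation.ReflTransGen.single hms_ori) hlem
    exact (Γ.ori_adj hms_ori).ne this
  -- join of p and ms is p'
  obtain ⟨j, hj⟩ := Γ.toModularComplex.join_exists (p := p) (q := ms) (x := p')
    (Relation.ReflTransGen.single hori) hms_p'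
  have hjp' : Γ.toModularComplex.le j p' := hj.2.2 p' (Relation.ReflTransGen.single hori) hms_p'
  have e2 := Γ.toModularComplex.le_dist_add hj.1 hjp'
  rw [hunit] at e2
  have hjj : j = p' := by
    rcases (by omega : Γ.G.dist p j = 0 ∨ Γ.G.dist j p' = 0) with h0 | h0
    · exfalso
      have : p = j := Γ.toModularComplex.eq_of_dist_zero h0
      rw [← this] at hj
      exact hnot hj.2.1
    · exact Γ.toModularComplex.eq_of_dist_zero h0
  rw [hjj] at hj
  -- sq m p  via interval property of (a,b)
  have hsqmp : Γ.sq m p := Γ.sq_interval hab hm.1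
    ⟨hm.2.2 a hpa hqa, hm.1.trans hpb⟩ ⟨hpa, hpb⟩
  exact Γ.sq_join hsqmp (Γ.sq_edge hms_ori) hj

theorem diamond_unit_up {a b p p' q' q : V}
    (hab : Γ.sq a b) (hpa : Γ.toModularComplex.le a p) (hpb : Γ.toModularComplex.le p b)
    (hqa : Γ.toModularComplex.le a q) (hqb : Γ.toModularComplex.le q b)
    (hrect : IsoRect Γ.G p p' q' q) (hunit : Γ.G.dist p p' = 1) (hori : Γ.ori p p') :
    Γ.DiamondNb p' q' := by
  obtain ⟨s1, s2, s3, s4⟩ := Γ.toModularComplex.rect_sides hrect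
  have hunitq : Γ.G.dist q q' = 1 := by
    have c := Γ.toModularComplex.dcomm q' q
    omega
  have horiq : Γ.ori q q' := Γ.toModularComplex.rect_transfer (Γ.G.dist p q) p p' q' q
    hrect hunit hori rfl
  obtain ⟨m, hm⟩ := Γ.toModularComplex.meet_exists (p := p) (q := q) (x := a) hpa hqa
  obtain ⟨c, hc⟩ := Γ.toModularComplex.join_exists (p := p) (q := q) (x := b) hpb hqb
  have hmint := Γ.toModularComplex.meet_interval hm
  have hcint := Γ.toModularComplex.join_interval hc
  -- raise the meet
  obtain ⟨ms, hms_ori, hms_p', hms_rect, hms_d⟩ :=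
    Γ.toModularComplex.rect_raise (Γ.G.dist m p) p p' q' q m hrect hunit hori hm.1 rfl hmint
  have hms_q' : Γ.toModularComplex.le ms q' :=
    Γ.toModularComplex.rect_climb (Γ.G.dist m q) m ms q' q hms_rect hms_d hms_ori hm.2.1 rfl
  -- raise the join
  obtain ⟨cs, hcs_ori, hcs_p', hcs_rect, hcs_d⟩ :=
    Γ.toModularComplex.rect_draise (Γ.G.dist p c) p p' q' q c hrect hunit hori hc.1 rfl hcint
  have hcs_q' : Γ.toModularComplex.le q' cs :=
    Γ.toModularComplex.rect_dclimb (Γ.G.dist q c) c cs q' q hcs_rect hcs_d hcs_ori hc.2.1 rfl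
  -- the two sq facts
  have hsq1 : Γ.sq m p' := Γ.sq_meet_raised hab hpa hpb hqa hrect hunit hori horiq hm
    hms_ori hms_p' hms_q'
  have hm' : Γ.toModularComplex.IsMeet q p m := ⟨hm.2.1, hm.1, fun x h1 h2 => hm.2.2 x h2 h1⟩
  have hrect' : IsoRect Γ.G q q' p' p :=
    Γ.toModularComplex.rect_rotate (Γ.toModularComplex.rect_reflect hrect)
  have hsq2 : Γ.sq m q' := Γ.sq_meet_raised hab hqa hqb hpa hrect' hunitq horiq hori hm'
    hms_ori hms_q' hms_p'
  obtain ⟨C, hC⟩ := Γ.toModularComplex.join_exists (p := p') (q := q') (x := cs) hcs_p' hcs_q'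
  have hsqC : Γ.sq m C := Γ.sq_join hsq1 hsq2 hC
  exact ⟨m, C, hsqC, ⟨hm.1.tail hori, hC.1⟩, ⟨hm.2.1.tail horiq, hC.2.1⟩⟩

theorem diamond_unit {p p' q' q : V}
    (hrect : IsoRect Γ.G p p' q' q) (hunit : Γ.G.dist p p' = 1)
    (hdia : Γ.DiamondNb p q) : Γ.DiamondNb p' q' := by
  obtain ⟨a, b, hab, ⟨hpa, hpb⟩, ⟨hqa, hqb⟩⟩ := hdia
  rcases Γ.ori_total (Γ.toModularComplex.adj_of_dist_one hunit) with ho | ho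
  · exact Γ.diamond_unit_up hab hpa hpb hqa hqb hrect hunit ho
  · have hop := (Γ.op).diamond_unit_up (a := b) (b := a) (p := p) (p' := p') (q' := q') (q := q)
      hab ((Γ.toModularComplex.op_le).mpr hpb) ((Γ.toModularComplex.op_le).mpr hpa)
      ((Γ.toModularComplex.op_le).mpr hqb) ((Γ.toModularComplex.op_le).mpr hqa)
      hrect hunit ho
    obtain ⟨A, B, hAB, hpm, hqm⟩ := hop
    exact ⟨B, A, hAB, ⟨(Γ.toModularComplex.op_le).mp hpm.2, (Γ.toModularComplex.op_le).mp hpm.1⟩,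
      ⟨(Γ.toModularComplex.op_le).mp hqm.2, (Γ.toModularComplex.op_le).mp hqm.1⟩⟩

theorem diamond_rect_aux : ∀ t, ∀ p p' q' q : V, IsoRect Γ.G p p' q' q →
    Γ.G.dist p p' = t → Γ.DiamondNb p q → Γ.DiamondNb p' q' := by
  intro t
  induction t using Nat.strong_induction_on with
  | _ t ih =>
  intro p p' q' q hrect ht hdia
  obtain ⟨s1, s2, s3, s4⟩ := Γ.toModularComplex.rect_sides hrect
  match t, ht with
  | 0, ht =>
    have e1 : p = p' := Γ.toModularComplex.eq_of_dist_zero ht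
    have e2 : q = q' := Γ.toModularComplex.eq_of_dist_zero (by
      have c := Γ.toModularComplex.dcomm q' q
      omega)
    rw [← e1, ← e2]
    exact hdia
  | (t' + 1), ht =>
    obtain ⟨u, hadj, hd⟩ := Γ.toModularComplex.exists_adj_dist (x := p) (y := p') (by omega)
    obtain ⟨w, hw1, hw2, hw3, hw4⟩ := Γ.toModularComplex.rect_split hrect hadj hd
    have hdu : Γ.DiamondNb u w := Γ.diamond_unit hw3 (Γ.toModularComplex.dist_adj hadj) hdia
    exact ih t' (by omega) u p' q' w hw4 (by omega) hdu
end ExtendedModularComplex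



/-- If `(p,p',q',q)` is an isometric rectangle and `p, q` are
◇-neighbors, then `p', q'` are ◇-neighbors. -/
theorem diamondNb_of_isoRect (Γ : ExtendedModularComplex V) (p p' q' q : V)
    (hrect : IsoRect Γ.G p p' q' q) (hpq : Γ.DiamondNb p q) : Γ.DiamondNb p' q' :=
  Γ.diamond_rect_aux (Γ.G.dist p p') p p' q' q hrect rfl hpq

end ZeroExt
end

section
/- Let (Γ,⊑) be an extended modular complex and p,q vertices. Let a be a gate of q at L^-_p, let b be a gate of q at L^+_p, and let m be a median of a,b,q. Then p∧m exists and equals a; p∨m exists and equals b; a ⊑ b (in particular p and m are ◇-neighbors); and if p ≠ q then m ≠ p. -/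
namespace ZeroExt

variable {V : Type*}

variable [Fintype V]

set_option linter.unusedSectionVars false

section AuxBasic

variable [Fintype V] (Γ : ModularComplex V)

private lemma MCd_self (x : V) : Γ.G.dist x x = 0 := by simp

private lemma MCd_comm (x y : V) : Γ.G.dist x y = Γ.G.dist y x := SimpleGraph.dist_comm

private lemma MCd_tri (x y z : V) : Γ.G.dist x z ≤ Γ.G.dist x y + Γ.G.dist y z :=
  Γ.connected.dist_triangle

private lemma MCd_eq_zero {x y : V} (h : Γ.G.dist x y = 0) : x = y :=
  (Γ.connected.dist_eq_zero_iff).mp h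

private lemma MCd_adj {x y : V} (h : Γ.G.dist x y = 1) : Γ.G.Adj x y :=
  SimpleGraph.dist_eq_one_iff_adj.mp h

private lemma MCd_of_adj {x y : V} (h : Γ.G.Adj x y) : Γ.G.dist x y = 1 :=
  SimpleGraph.dist_eq_one_iff_adj.mpr h

/-- Modular graphs are triangle-free. -/
private lemma MC_triangle_free {x y z : V} (hxy : Γ.G.Adj x y) (hyz : Γ.G.Adj y z)
    (hxz : Γ.G.Adj x z) : False := by
  obtain ⟨m, h1, h2, h3⟩ := Γ.modular x y z
  simp only [interval, Set.mem_setOf_eq] at h1 h2 h3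
  have exy := MCd_of_adj Γ hxy
  have eyz := MCd_of_adj Γ hyz
  have exz := MCd_of_adj Γ hxz
  rcases Nat.eq_zero_or_pos (Γ.G.dist x m) with h | h
  · have hmx : m = x := (MCd_eq_zero Γ h).symm
    subst hmx
    have c1 := MCd_comm Γ y m
    omega
  · have h0 : Γ.G.dist m y = 0 := by omega
    have hmy : m = y := MCd_eq_zero Γ h0
    subst hmy
    omega

/-- First vertex on a geodesic. -/
private lemma MC_first_step {x z : V} (h : Γ.G.dist x z ≠ 0) :
    ∃ y, Γ.G.dist x y = 1 ∧ Γ.G.dist x y + Γ.G.dist y z = Γ.G.dist x z := by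
  obtain ⟨p, hp⟩ := Γ.connected.exists_walk_length_eq_dist x z
  cases p with
  | nil => simp at h
  | cons hadj q =>
    rename_i y
    refine ⟨y, MCd_of_adj Γ hadj, ?_⟩
    have h1 : Γ.G.dist y z ≤ q.length := SimpleGraph.dist_le q
    have h2 : Γ.G.dist x z ≤ Γ.G.dist x y + Γ.G.dist y z := MCd_tri Γ x y z
    have hp' : q.length + 1 = Γ.G.dist x z := by
      rw [← hp]; simp [SimpleGraph.Walk.length_cons]
    have exy : Γ.G.dist x y = 1 := MCd_of_adj Γ hadj
    omega

/-- Interval composition: if `w ∈ I(x,y)` and `y ∈ I(x,z)` then `w ∈ I(x,z)`. -/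
private lemma MC_interval_trans {x y z w : V} (h1 : w ∈ interval Γ.G x y)
    (h2 : y ∈ interval Γ.G x z) : w ∈ interval Γ.G x z := by
  simp only [interval, Set.mem_setOf_eq] at *
  have t1 := MCd_tri Γ w y z
  have t2 := MCd_tri Γ x w z
  omega

/-- Interval composition on the right. -/
private lemma MC_interval_trans' {x y z w : V} (h1 : w ∈ interval Γ.G y z)
    (h2 : y ∈ interval Γ.G x z) : w ∈ interval Γ.G x z := by
  simp only [interval, Set.mem_setOf_eq] at *
  have t1 := MCd_tri Γ x y w
  have t2 := MCd_tri Γ x w z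
  omega

private lemma MC_interval_symm {x y w : V} (h : w ∈ interval Γ.G x y) :
    w ∈ interval Γ.G y x := by
  simp only [interval, Set.mem_setOf_eq] at *
  have c1 := MCd_comm Γ x y
  have c2 := MCd_comm Γ x w
  have c3 := MCd_comm Γ w y
  omega

end AuxBasic
section AuxPath

variable [Fintype V] (Γ : ModularComplex V)

/-- Every directed path in a modular complex is a geodesic. -/
private lemma MC_dirpath_dist :
    ∀ k (f : ℕ → V), (∀ i < k, Γ.ori (f i) (f (i + 1))) → Γ.G.dist (f 0) (f k) = k := by
  intro k
  induction k using Nat.strong_induction_on with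
  | _ k IH =>
    match k with
    | 0 => intro f _; simp
    | 1 => intro f hf; exact MCd_of_adj Γ (Γ.ori_adj (hf 0 one_pos))
    | (k + 2) =>
    intro f hf
    have IH1 : Γ.G.dist (f 0) (f (k + 1)) = k + 1 :=
      IH (k + 1) (by omega) f (fun i hi => hf i (by omega))
    have IH2 : Γ.G.dist (f 1) (f (k + 2)) = k + 1 := by
      have := IH (k + 1) (by omega) (fun i => f (i + 1)) (fun i hi => hf (i + 1) (by omega))
      simpa [show k + 1 + 1 = k + 2 from rfl] using this
    have IH3 : Γ.G.dist (f 0) (f k) = k :=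
      IH k (by omega) f (fun i hi => hf i (by omega))
    have hlast : Γ.G.Adj (f (k + 1)) (f (k + 2)) := Γ.ori_adj (hf (k + 1) (by omega))
    have hfirst : Γ.G.Adj (f 0) (f 1) := Γ.ori_adj (hf 0 (by omega))
    have hub : Γ.G.dist (f 0) (f (k + 2)) ≤ k + 2 := by
      have := MCd_tri Γ (f 0) (f (k + 1)) (f (k + 2))
      rw [IH1, MCd_of_adj Γ hlast] at this; omega
    have hlb : k + 1 ≤ 1 + Γ.G.dist (f 0) (f (k + 2)) := by
      have t := MCd_tri Γ (f 1) (f 0) (f (k + 2))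
      rw [← IH2]
      have c := MCd_comm Γ (f 1) (f 0)
      rw [MCd_of_adj Γ hfirst] at c
      omega
    -- three cases for D
    rcases (show Γ.G.dist (f 0) (f (k + 2)) = k ∨ Γ.G.dist (f 0) (f (k + 2)) = k + 1 ∨
        Γ.G.dist (f 0) (f (k + 2)) = k + 2 by omega) with hD | hD | hD
    · -- D = k : impossible
      exfalso
      match k with
      | 0 =>
        have heq : f 0 = f 2 := MCd_eq_zero Γ hD
        have h01 : Γ.le (f 0) (f 1) := Relation.ReflTransGen.single (hf 0 (by omega))
        have h10 : Γ.le (f 1) (f 0) := by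
          have := Relation.ReflTransGen.single (hf 1 (by omega))
          rwa [← heq] at this
        exact hfirst.ne (Γ.acyclic h01 h10)
      | (k + 1) =>
        -- d(f (k+1), f (k+3)) = 2
        have hd2 : Γ.G.dist (f (k + 1)) (f (k + 3)) = 2 := by
          have hub2 : Γ.G.dist (f (k + 1)) (f (k + 3)) ≤ 2 := by
            have := MCd_tri Γ (f (k + 1)) (f (k + 2)) (f (k + 3))
            have e1 : Γ.G.dist (f (k + 1)) (f (k + 2)) = 1 :=
              MCd_of_adj Γ (Γ.ori_adj (hf (k + 1) (by omega)))
            have e2 : Γ.G.dist (f (k + 2)) (f (k + 3)) = 1 :=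
              MCd_of_adj Γ (Γ.ori_adj (hf (k + 2) (by omega)))
            omega
          have hne0 : Γ.G.dist (f (k + 1)) (f (k + 3)) ≠ 0 := by
            intro h0
            have heq : f (k + 1) = f (k + 3) := MCd_eq_zero Γ h0
            have h01 : Γ.le (f (k + 1)) (f (k + 2)) :=
              Relation.ReflTransGen.single (hf (k + 1) (by omega))
            have h10 : Γ.le (f (k + 2)) (f (k + 1)) := by
              have := Relation.ReflTransGen.single (hf (k + 2) (by omega))
              rwa [← heq] at this
            exact (Γ.ori_adj (hf (k + 1) (by omega))).ne (Γ.acyclic h01 h10)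
          have hne1 : Γ.G.dist (f (k + 1)) (f (k + 3)) ≠ 1 := by
            intro h1
            exact MC_triangle_free Γ (Γ.ori_adj (hf (k + 1) (by omega)))
              (Γ.ori_adj (hf (k + 2) (by omega))) (MCd_adj Γ h1)
          omega
        -- median w of (f 0, f (k+1), f (k+3))
        obtain ⟨w, hw1, hw2, hw3⟩ := Γ.modular (f 0) (f (k + 1)) (f (k + 3))
        simp only [interval, Set.mem_setOf_eq] at hw1 hw2 hw3
        rw [IH3] at hw1
        rw [hd2] at hw2
        rw [hD] at hw3
        -- derive positions
        have hcw : Γ.G.dist (f (k + 1)) w = Γ.G.dist w (f (k + 1)) := MCd_comm Γ _ _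
        have hwk1 : Γ.G.dist w (f (k + 1)) = 1 := by omega
        have hw0 : Γ.G.dist (f 0) w = k := by omega
        have hwk3 : Γ.G.dist w (f (k + 3)) = 1 := by omega
        -- 4-cycle (f (k+2), f (k+3), w, f (k+1))
        have hcyc : IsFourCycle Γ.G (f (k + 2)) (f (k + 3)) w (f (k + 1)) := by
          refine ⟨Γ.ori_adj (hf (k + 2) (by omega)), ?_, ?_, Γ.ori_adj (hf (k + 1) (by omega)),
            ?_, ?_⟩
          · exact (MCd_adj Γ hwk3).symm
          · exact MCd_adj Γ hwk1
          · -- f (k+2) ≠ w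
            intro hEq
            have e1 : Γ.G.dist (f 0) (f (k + 2)) = k + 2 :=
              IH (k + 2) (by omega) f (fun i hi => hf i (by omega))
            rw [hEq] at e1
            omega
          · -- f (k+3) ≠ f (k+1)
            intro hEq
            rw [← hEq] at hd2
            have hs := MCd_self Γ (f (k + 3))
            omega
        have hori : Γ.ori (f (k + 1)) w :=
          Γ.admissible hcyc (hf (k + 2) (by omega))
        -- new path g of length k+2 from f 0 to w
        have hG : Γ.G.dist (f 0) w = k + 2 := by
          have h' := IH (k + 2) (by omega) (fun i => if i ≤ k + 1 then f i else w)
            (fun i hi => by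
              show Γ.ori (if i ≤ k + 1 then f i else w) (if i + 1 ≤ k + 1 then f (i + 1) else w)
              rcases (show i < k + 1 ∨ i = k + 1 by omega) with h | h
              · rw [if_pos (by omega : i ≤ k + 1), if_pos (by omega : i + 1 ≤ k + 1)]
                exact hf i (by omega)
              · subst h
                rw [if_pos (le_refl (k + 1)), if_neg (by omega : ¬ k + 1 + 1 ≤ k + 1)]
                exact hori)
          have e0 : (if (0 : ℕ) ≤ k + 1 then f 0 else w) = f 0 := if_pos (by omega)
          have ek : (if k + 2 ≤ k + 1 then f (k + 2) else w) = w := if_neg (by omega)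
          calc Γ.G.dist (f 0) w
              = Γ.G.dist (if (0 : ℕ) ≤ k + 1 then f 0 else w)
                  (if k + 2 ≤ k + 1 then f (k + 2) else w) := by rw [e0, ek]
            _ = k + 2 := h'
        omega
    · -- D = k + 1 : impossible
      exfalso
      obtain ⟨μ, hm1, hm2, hm3⟩ := Γ.modular (f 0) (f (k + 1)) (f (k + 2))
      simp only [interval, Set.mem_setOf_eq] at hm1 hm2 hm3
      rw [IH1] at hm1
      rw [MCd_of_adj Γ hlast] at hm2
      rw [hD] at hm3
      rcases (show Γ.G.dist (f (k + 1)) μ = 0 ∨ Γ.G.dist μ (f (k + 2)) = 0 by omega) with h | h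
      · have : μ = f (k + 1) := (MCd_eq_zero Γ h).symm
        subst this
        omega
      · have : μ = f (k + 2) := MCd_eq_zero Γ h
        subst this
        have c := MCd_comm Γ (f (k + 2)) (f (k + 1))
        omega
    · exact hD

/-- A `le`-relation yields a directed path. -/
private lemma MC_le_path {x y : V} (h : Γ.le x y) :
    ∃ (k : ℕ) (f : ℕ → V), f 0 = x ∧ f k = y ∧ ∀ i < k, Γ.ori (f i) (f (i + 1)) := by
  induction h with
  | refl => exact ⟨0, fun _ => x, rfl, rfl, by omega⟩
  | tail hab hbc IH =>
    rename_i b c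
    obtain ⟨k, f, h0, hk, hp⟩ := IH
    refine ⟨k + 1, fun i => if i ≤ k then f i else c, by simp [h0], by simp, ?_⟩
    intro i hi
    show Γ.ori (if i ≤ k then f i else c) (if i + 1 ≤ k then f (i + 1) else c)
    rcases (show i < k ∨ i = k by omega) with h | h
    · rw [if_pos (by omega : i ≤ k), if_pos (by omega : i + 1 ≤ k)]
      exact hp i h
    · subst h
      rw [if_pos (le_refl (i : ℕ)), if_neg (by omega : ¬ i + 1 ≤ i), hk]
      exact hbc

/-- Distances add along chains of the order. -/
private lemma MC_dist_add_of_le {x y z : V} (hxy : Γ.le x y) (hyz : Γ.le y z) :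
    Γ.G.dist x y + Γ.G.dist y z = Γ.G.dist x z := by
  obtain ⟨k1, f, hf0, hfk, hfp⟩ := MC_le_path Γ hxy
  obtain ⟨k2, g, hg0, hgk, hgp⟩ := MC_le_path Γ hyz
  have hdxy : Γ.G.dist x y = k1 := by
    have := MC_dirpath_dist Γ k1 f hfp; rwa [hf0, hfk] at this
  have hdyz : Γ.G.dist y z = k2 := by
    have := MC_dirpath_dist Γ k2 g hgp; rwa [hg0, hgk] at this
  have hdxz : Γ.G.dist x z = k1 + k2 := by
    have hcat := MC_dirpath_dist Γ (k1 + k2) (fun i => if i ≤ k1 then f i else g (i - k1))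
      (fun i hi => by
        show Γ.ori (if i ≤ k1 then f i else g (i - k1))
          (if i + 1 ≤ k1 then f (i + 1) else g (i + 1 - k1))
        rcases (show i + 1 ≤ k1 ∨ i = k1 ∨ i > k1 by omega) with h | h | h
        · rw [if_pos (by omega : i ≤ k1), if_pos h]
          exact hfp i (by omega)
        · subst h
          rw [if_pos (le_refl (i : ℕ)), if_neg (by omega : ¬ i + 1 ≤ i)]
          have e1 : i + 1 - i = 1 := by omega
          rw [e1, hfk, ← hg0]
          exact hgp 0 (by omega)
        · rw [if_neg (by omega : ¬ i ≤ k1), if_neg (by omega : ¬ i + 1 ≤ k1)]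
          have e1 : i + 1 - k1 = (i - k1) + 1 := by omega
          rw [e1]
          exact hgp (i - k1) (by omega))
    have e0 : (if (0 : ℕ) ≤ k1 then f 0 else g (0 - k1)) = x := by
      rw [if_pos (by omega : (0 : ℕ) ≤ k1)]; exact hf0
    by_cases hk2 : k2 = 0
    · subst hk2
      have hyz' : y = z := by rw [← hg0, ← hgk]
      have ek : (if k1 + 0 ≤ k1 then f (k1 + 0) else g (k1 + 0 - k1)) = z := by
        rw [if_pos (by omega : k1 + 0 ≤ k1)]
        have : k1 + 0 = k1 := by omega
        rw [this, hfk]; exact hyz'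
      calc Γ.G.dist x z = Γ.G.dist (if (0 : ℕ) ≤ k1 then f 0 else g (0 - k1))
            (if k1 + 0 ≤ k1 then f (k1 + 0) else g (k1 + 0 - k1)) := by rw [e0, ek]
        _ = k1 + 0 := hcat
    · have ek : (if k1 + k2 ≤ k1 then f (k1 + k2) else g (k1 + k2 - k1)) = z := by
        rw [if_neg (by omega : ¬ k1 + k2 ≤ k1), show k1 + k2 - k1 = k2 by omega, hgk]
      calc Γ.G.dist x z = Γ.G.dist (if (0 : ℕ) ≤ k1 then f 0 else g (0 - k1))
            (if k1 + k2 ≤ k1 then f (k1 + k2) else g (k1 + k2 - k1)) := by rw [e0, ek]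
        _ = k1 + k2 := hcat
  omega

private lemma MC_le_refl (x : V) : Γ.le x x := Relation.ReflTransGen.refl

private lemma MC_le_trans {x y z : V} (h1 : Γ.le x y) (h2 : Γ.le y z) : Γ.le x z :=
  Relation.ReflTransGen.trans h1 h2

private lemma MC_le_antisymm {x y : V} (h1 : Γ.le x y) (h2 : Γ.le y x) : x = y :=
  Γ.acyclic h1 h2

private lemma MC_eq_of_le_dist_zero {x y : V} (h : Γ.le x y) (hd : Γ.G.dist x y = 0) : x = y :=
  MCd_eq_zero Γ hd

private lemma MC_ori_of_le_dist_one {x y : V} (h : Γ.le x y) (hd : Γ.G.dist x y = 1) :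
    Γ.ori x y := by
  obtain ⟨k, f, h0, hk, hp⟩ := MC_le_path Γ h
  have hdk : Γ.G.dist x y = k := by
    have := MC_dirpath_dist Γ k f hp; rwa [h0, hk] at this
  have hk1 : k = 1 := by omega
  subst hk1
  have := hp 0 (by omega)
  rwa [h0, hk] at this
end AuxPath
section AuxLC

variable [Fintype V] (Γ : ModularComplex V)

/-- Suffix of a directed path is dominated. -/
private lemma MC_path_le {k : ℕ} {f : ℕ → V} (hp : ∀ i < k, Γ.ori (f i) (f (i + 1)))
    {i j : ℕ} (hij : i ≤ j) (hjk : j ≤ k) : Γ.le (f i) (f j) := by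
  induction j, hij using Nat.le_induction with
  | base => exact MC_le_refl Γ _
  | succ j hij IH =>
    exact Relation.ReflTransGen.tail (IH (by omega)) (hp j (by omega))

/-- Key step: neighbours of `a` inside `I(a,b)` with `a ⪯ b` are directed away from `a`. -/
private lemma MC_le_step :
    ∀ n a b y, Γ.le a b → Γ.G.dist a b = n → Γ.G.Adj a y → y ∈ interval Γ.G a b →
      Γ.ori a y ∧ Γ.le y b := by
  intro n
  induction n using Nat.strong_induction_on with
  | _ n IH =>
    intro a b y hab hn hadj hy
    simp only [interval, Set.mem_setOf_eq] at hy
    rw [hn] at hy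
    have hay : Γ.G.dist a y = 1 := MCd_of_adj Γ hadj
    have hn1 : 1 ≤ n := by omega
    -- directed geodesic from a to b
    obtain ⟨k, f, h0, hk, hp⟩ := MC_le_path Γ hab
    have hdk : k = n := by
      have := MC_dirpath_dist Γ k f hp; rw [h0, hk, hn] at this; omega
    subst hdk
    have hw1 : Γ.G.dist a (f 1) = 1 := by
      have : Γ.G.dist (f 0) (f 1) = 1 := MCd_of_adj Γ (Γ.ori_adj (hp 0 (by omega)))
      rwa [h0] at this
    have horia : Γ.ori a (f 1) := by have := hp 0 (by omega); rwa [h0] at this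
    have hlef1 : Γ.le (f 1) b := by
      have := MC_path_le Γ hp (show 1 ≤ k from by omega) (le_refl k)
      rwa [hk] at this
    have hdf1b : Γ.G.dist (f 1) b = k - 1 := by
      have h' := MC_dirpath_dist Γ (k - 1) (fun i => f (i + 1)) (fun i hi => hp (i + 1) (by omega))
      have e : (fun i => f (i + 1)) (k - 1) = f k := by
        show f (k - 1 + 1) = f k
        congr 1; omega
      rw [show f (0 + 1) = f 1 from rfl, show f (k - 1 + 1) = f k from e, hk] at h'
      exact h'
    by_cases hyw : y = f 1
    · subst hyw; exact ⟨horia, hlef1⟩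
    · -- y ≠ f 1
      have hdyb : Γ.G.dist y b = k - 1 := by omega
      have hdyw : Γ.G.dist y (f 1) = 2 := by
        have hub : Γ.G.dist y (f 1) ≤ 2 := by
          have := MCd_tri Γ y a (f 1)
          have c := MCd_comm Γ y a
          omega
        have hne0 : Γ.G.dist y (f 1) ≠ 0 := fun h0' => hyw (MCd_eq_zero Γ h0')
        have hne1 : Γ.G.dist y (f 1) ≠ 1 := by
          intro h1
          exact MC_triangle_free Γ hadj (MCd_adj Γ h1) (MCd_adj Γ hw1)
        omega
      have hk2 : 2 ≤ k := by
        rcases (show 2 ≤ k ∨ k = 1 by omega) with h | h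
        · exact h
        · exfalso
          have hyb : y = b := MCd_eq_zero Γ (by omega)
          have hf1b : f 1 = b := MCd_eq_zero Γ (by omega)
          exact hyw (hyb.trans hf1b.symm)
      obtain ⟨c, hc1, hc2, hc3⟩ := Γ.modular y (f 1) b
      simp only [interval, Set.mem_setOf_eq] at hc1 hc2 hc3
      rw [hdyw] at hc1
      rw [hdf1b] at hc2
      rw [hdyb] at hc3
      have hcc : Γ.G.dist y c = 1 ∧ Γ.G.dist c (f 1) = 1 ∧ Γ.G.dist c b = k - 2 := by
        have d1 := MCd_comm Γ y c
        have d2 := MCd_comm Γ (f 1) c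
        omega
      obtain ⟨hyc, hcf1, hcb⟩ := hcc
      have hIH := IH (k - 1) (by omega) (f 1) b c hlef1 hdf1b
        (MCd_adj Γ (by rw [MCd_comm Γ (f 1) c]; omega))
        (by simp only [interval, Set.mem_setOf_eq]; rw [hdf1b]
            have := MCd_comm Γ (f 1) c; omega)
      obtain ⟨horiw1c, hlecb⟩ := hIH
      have hcyc1 : IsFourCycle Γ.G (f 1) c y a := by
        refine ⟨MCd_adj Γ (by rw [MCd_comm Γ (f 1) c]; omega), (MCd_adj Γ hyc).symm,
          hadj.symm, Γ.ori_adj horia, ?_, ?_⟩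
        · intro hEq
          rw [← hEq] at hdyw
          have := MCd_self Γ (f 1)
          have := MCd_comm Γ (f 1) (f 1)
          omega
        · intro hEq
          rw [hEq] at hcb
          omega
      have horiay : Γ.ori a y := Γ.admissible hcyc1 horiw1c
      have hcyc2 : IsFourCycle Γ.G a (f 1) c y := by
        refine ⟨Γ.ori_adj horia, MCd_adj Γ (by rw [MCd_comm Γ (f 1) c]; omega),
          (MCd_adj Γ hyc).symm, hadj.symm, ?_, ?_⟩
        · intro hEq
          rw [← hEq] at hcb
          omega
        · intro hEq
          rw [hEq] at hdyw
          have := MCd_self Γ y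
          omega
      have horiyc : Γ.ori y c := Γ.admissible hcyc2 horia
      exact ⟨horiay, Relation.ReflTransGen.head horiyc hlecb⟩

/-- Lemma C : metric intervals of comparable pairs lie in the order interval. -/
private lemma MC_interval_le :
    ∀ n a b z, Γ.le a b → z ∈ interval Γ.G a b → Γ.G.dist a z = n →
      Γ.le a z ∧ Γ.le z b := by
  intro n
  induction n using Nat.strong_induction_on with
  | _ n IH =>
    intro a b z hab hz hn
    match n, hn with
    | 0, hn =>
      have : a = z := MCd_eq_zero Γ hn
      subst this
      exact ⟨MC_le_refl Γ _, hab⟩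
    | (n + 1), hn =>
      obtain ⟨y, hy1, hy2⟩ := MC_first_step Γ (x := a) (z := z) (by omega)
      have hyIaz : y ∈ interval Γ.G a z := by
        simp only [interval, Set.mem_setOf_eq]; omega
      have hyIab : y ∈ interval Γ.G a b := MC_interval_trans Γ hyIaz hz
      obtain ⟨horiay, hleyb⟩ := MC_le_step Γ (Γ.G.dist a b) a b y hab rfl (MCd_adj Γ hy1) hyIab
      have hzIyb : z ∈ interval Γ.G y b := by
        simp only [interval, Set.mem_setOf_eq] at hz hyIab ⊢
        omega
      have hdyz : Γ.G.dist y z = n := by omega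
      obtain ⟨hleyz, hlezb⟩ := IH n (by omega) y b z hleyb hzIyb hdyz
      exact ⟨Relation.ReflTransGen.head horiay hleyz, hlezb⟩

end AuxLC
section AuxFC

variable [Fintype V] (Γ : ModularComplex V)

/-- Principal filters are convex (key lemma). -/
private lemma MC_filter_convex :
    ∀ n u x y z, Γ.le u x → Γ.le u y → z ∈ interval Γ.G x y → Γ.G.dist x y = n →
      Γ.le u z := by
  intro n
  induction n using Nat.strong_induction_on with
  | _ n IHn =>
    -- core: the case u ∈ I(x,y)
    have core : ∀ u x y z, Γ.le u x → Γ.le u y → u ∈ interval Γ.G x y →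
        z ∈ interval Γ.G x y → Γ.G.dist x y = n → Γ.le u z := by
      intro u x y z hux huy hu hz hn
      simp only [interval, Set.mem_setOf_eq] at hu hz
      by_cases hzx : Γ.G.dist x z = 0
      · have : x = z := MCd_eq_zero Γ hzx; exact this ▸ hux
      by_cases hzy : Γ.G.dist z y = 0
      · have : z = y := MCd_eq_zero Γ hzy; exact this ▸ huy
      by_cases hux0 : Γ.G.dist x u = 0
      · -- u = x
        have hxu : x = u := MCd_eq_zero Γ hux0
        subst hxu
        exact (MC_interval_le Γ (Γ.G.dist x z) x y z huy
          (by simp only [interval, Set.mem_setOf_eq]; omega) rfl).1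
      by_cases huy0 : Γ.G.dist u y = 0
      · -- u = y
        have huy' : u = y := MCd_eq_zero Γ huy0
        subst huy'
        have hz' : z ∈ interval Γ.G u x := by
          simp only [interval, Set.mem_setOf_eq]
          have c1 := MCd_comm Γ x z
          have c2 := MCd_comm Γ z u
          have c3 := MCd_comm Γ x u
          omega
        exact (MC_interval_le Γ (Γ.G.dist u z) u x z hux hz' rfl).1
      -- generic case
      have hn2 : 2 ≤ n := by omega
      obtain ⟨z1, hz11, hz12⟩ := MC_first_step Γ (x := x) (z := z) hzx
      have hz1Ixz : z1 ∈ interval Γ.G x z := by simp only [interval, Set.mem_setOf_eq]; omega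
      have hz1Ixy : z1 ∈ interval Γ.G x y := MC_interval_trans Γ hz1Ixz
        (by simp only [interval, Set.mem_setOf_eq]; omega)
      have hdz1y : Γ.G.dist z1 y = n - 1 := by
        simp only [interval, Set.mem_setOf_eq] at hz1Ixy; omega
      have hzIz1y : z ∈ interval Γ.G z1 y := by
        simp only [interval, Set.mem_setOf_eq] at hz1Ixz ⊢
        omega
      -- claim : u ⪯ z1
      have hlez1 : Γ.le u z1 := by
        have hadjxz1 : Γ.G.Adj x z1 := MCd_adj Γ hz11
        rcases Γ.ori_total hadjxz1 with hxz1 | hz1x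
        · exact Relation.ReflTransGen.tail hux hxz1
        · -- ori z1 x
          obtain ⟨x1, hx11, hx12⟩ := MC_first_step Γ (x := x) (z := u) hux0
          have hx1Ixu : x1 ∈ interval Γ.G x u := by
            simp only [interval, Set.mem_setOf_eq]; omega
          have hx1Iux : x1 ∈ interval Γ.G u x := MC_interval_symm Γ hx1Ixu
          obtain ⟨hlux1, hlx1x⟩ := MC_interval_le Γ (Γ.G.dist u x1) u x x1 hux hx1Iux rfl
          have horix1x : Γ.ori x1 x := MC_ori_of_le_dist_one Γ hlx1x
            (by rw [MCd_comm Γ x1 x]; exact hx11)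
          by_cases hx1z1 : x1 = z1
          · exact hx1z1 ▸ hlux1
          · have hdx1z1 : Γ.G.dist x1 z1 = 2 := by
              have hub : Γ.G.dist x1 z1 ≤ 2 := by
                have := MCd_tri Γ x1 x z1
                have c := MCd_comm Γ x1 x
                omega
              have hne0 : Γ.G.dist x1 z1 ≠ 0 := fun h0' => hx1z1 (MCd_eq_zero Γ h0')
              have hne1 : Γ.G.dist x1 z1 ≠ 1 := by
                intro h1
                exact MC_triangle_free Γ (MCd_adj Γ hx11) (MCd_adj Γ h1) hadjxz1
              omega
            have hdx1y : Γ.G.dist x1 y = n - 1 := by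
              have hx1Ixy : x1 ∈ interval Γ.G x y := MC_interval_trans Γ hx1Ixu
                (by simp only [interval, Set.mem_setOf_eq]; omega)
              simp only [interval, Set.mem_setOf_eq] at hx1Ixy
              omega
            obtain ⟨χ, hχ1, hχ2, hχ3⟩ := Γ.modular x1 z1 y
            simp only [interval, Set.mem_setOf_eq] at hχ1 hχ2 hχ3
            rw [hdx1z1] at hχ1
            rw [hdz1y] at hχ2
            rw [hdx1y] at hχ3
            have hχd : Γ.G.dist x1 χ = 1 ∧ Γ.G.dist χ z1 = 1 ∧ Γ.G.dist χ y = n - 2 := by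
              have d1 := MCd_comm Γ z1 χ
              omega
            obtain ⟨hx1χ, hχz1, hχy⟩ := hχd
            have hχnex : χ ≠ x := by
              intro hEq
              rw [hEq] at hχy
              omega
            have hcyc : IsFourCycle Γ.G x1 x z1 χ := by
              refine ⟨MCd_adj Γ (by rw [MCd_comm Γ x1 x]; exact hx11), hadjxz1,
                (MCd_adj Γ hχz1).symm, (MCd_adj Γ hx1χ).symm, hx1z1, fun h => hχnex h.symm⟩
            have horiχz1 : Γ.ori χ z1 := Γ.admissible hcyc horix1x
            have hleuχ : Γ.le u χ := IHn (n - 1) (by omega) u x1 y χ hlux1 huy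
              (by simp only [interval, Set.mem_setOf_eq]; omega) hdx1y
            exact Relation.ReflTransGen.tail hleuχ horiχz1
      exact IHn (n - 1) (by omega) u z1 y z hlez1 huy hzIz1y hdz1y
    -- inner reduction to the core
    have inner : ∀ M u x y z, Γ.le u x → Γ.le u y → z ∈ interval Γ.G x y →
        Γ.G.dist x y = n → Γ.G.dist u x + Γ.G.dist u y = M → Γ.le u z := by
      intro M
      induction M using Nat.strong_induction_on with
      | _ M IHM =>
        intro u x y z hux huy hz hn hM
        obtain ⟨g, hg1, hg2, hg3⟩ := Γ.modular x y u
        by_cases hug : Γ.G.dist u g = 0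
        · have : u = g := MCd_eq_zero Γ hug
          subst this
          exact core u x y z hux huy hg1 hz hn
        · have hgIux : g ∈ interval Γ.G u x := by
            simp only [interval, Set.mem_setOf_eq] at hg3 ⊢
            have c1 := MCd_comm Γ x g
            have c2 := MCd_comm Γ g u
            have c3 := MCd_comm Γ x u
            omega
          have hgIuy : g ∈ interval Γ.G u y := by
            simp only [interval, Set.mem_setOf_eq] at hg2 ⊢
            have c1 := MCd_comm Γ y g
            have c2 := MCd_comm Γ g u
            have c3 := MCd_comm Γ y u
            omega
          obtain ⟨s, hs1, hs2⟩ := MC_first_step Γ (x := u) (z := g) hug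
          have hsIug : s ∈ interval Γ.G u g := by simp only [interval, Set.mem_setOf_eq]; omega
          have hsIux : s ∈ interval Γ.G u x := MC_interval_trans Γ hsIug hgIux
          have hsIuy : s ∈ interval Γ.G u y := MC_interval_trans Γ hsIug hgIuy
          obtain ⟨hlus, hlsx⟩ := MC_interval_le Γ (Γ.G.dist u s) u x s hux hsIux rfl
          have hlsy : Γ.le s y := (MC_interval_le Γ (Γ.G.dist u s) u y s huy hsIuy rfl).2
          have hdsx : Γ.G.dist s x = Γ.G.dist u x - 1 := by
            simp only [interval, Set.mem_setOf_eq] at hsIux; omega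
          have hdsy : Γ.G.dist s y = Γ.G.dist u y - 1 := by
            simp only [interval, Set.mem_setOf_eq] at hsIuy; omega
          have h1 : 1 ≤ Γ.G.dist u x := by
            by_contra h
            have h0 : Γ.G.dist u x = 0 := by omega
            have : u = x := MCd_eq_zero Γ h0
            subst this
            simp only [interval, Set.mem_setOf_eq] at hg3
            have c := MCd_comm Γ u g
            have cs := MCd_self Γ u
            omega
          have h2 : 1 ≤ Γ.G.dist u y := by
            by_contra h
            have h0 : Γ.G.dist u y = 0 := by omega
            have : u = y := MCd_eq_zero Γ h0
            subst this
            simp only [interval, Set.mem_setOf_eq] at hg2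
            have c1 := MCd_comm Γ u g
            have cs := MCd_self Γ u
            omega
          have hlt : M - 2 < M := by omega
          have harg : Γ.G.dist s x + Γ.G.dist s y = M - 2 := by omega
          have hres := IHM (M - 2) hlt s x y z hlsx hlsy hz hn harg
          exact MC_le_trans Γ hlus hres
    intro u x y z hux huy hz hn
    exact inner (Γ.G.dist u x + Γ.G.dist u y) u x y z hux huy hz hn rfl

end AuxFC
section AuxOp

variable [Fintype V]

/-- The opposite modular complex (reversed orientation). -/
private def MCop (Γ : ModularComplex V) : ModularComplex V where
  G := Γ.G
  connected := Γ.connected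
  modular := Γ.modular
  ori x y := Γ.ori y x
  ori_adj h := (Γ.ori_adj h).symm
  ori_total h := (Γ.ori_total h).symm
  acyclic := by
    intro x y hxy hyx
    have h1 : Relation.ReflTransGen Γ.ori y x := Relation.reflTransGen_swap.mp hxy
    have h2 : Relation.ReflTransGen Γ.ori x y := Relation.reflTransGen_swap.mp hyx
    exact Γ.acyclic h2 h1
  admissible h hori := by
    obtain ⟨h12, h23, h34, h41, h13, h24⟩ := h
    exact Γ.admissible (x1 := _) (x2 := _) (x3 := _) (x4 := _)
      ⟨h12.symm, h41.symm, h34.symm, h23.symm, h24, h13⟩ hori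

private lemma MCop_le_iff (Γ : ModularComplex V) {x y : V} :
    (MCop Γ).le x y ↔ Γ.le y x := Relation.reflTransGen_swap

/-- Principal ideals are convex (dual key lemma). -/
private lemma MC_ideal_convex (Γ : ModularComplex V) {u x y z : V}
    (hxu : Γ.le x u) (hyu : Γ.le y u) (hz : z ∈ interval Γ.G x y) : Γ.le z u := by
  have h := MC_filter_convex (MCop Γ) ((MCop Γ).G.dist x y) u x y z
    ((MCop_le_iff Γ).mpr hxu) ((MCop_le_iff Γ).mpr hyu) hz rfl
  exact (MCop_le_iff Γ).mp h

end AuxOp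
section AuxExt

variable [Fintype V]

/-- Key induction : from `sq a p`, `sq p b`, `a = p ∧ m`, `b = p ∨ m` derive `sq a b`. -/
private lemma EMC_diamond_sq (Γ : ExtendedModularComplex V) :
    ∀ n a p m b, Γ.sq a p → Γ.sq p b → Γ.toModularComplex.IsMeet p m a →
      Γ.toModularComplex.IsJoin p m b → Γ.G.dist a m = n → Γ.sq a b := by
  intro n
  induction n using Nat.strong_induction_on with
  | _ n IH =>
    intro a p m b hsqap hsqpb hMeet hJoin hn
    match n, hn with
    | 0, hn =>
      have ham : a = m := MCd_eq_zero Γ.toModularComplex hn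
      subst ham
      have hbp : b = p := MC_le_antisymm Γ.toModularComplex (hJoin.2.2 p (MC_le_refl Γ.toModularComplex p) hMeet.1) hJoin.1
      rw [hbp]
      exact hsqap
    | (n + 1), hn =>
      have leam : Γ.toModularComplex.le a m := hMeet.2.1
      have leap : Γ.toModularComplex.le a p := hMeet.1
      have lepb : Γ.toModularComplex.le p b := hJoin.1
      have lemb : Γ.toModularComplex.le m b := hJoin.2.1
      obtain ⟨y, hy1, hy2⟩ := MC_first_step Γ.toModularComplex (x := m) (z := a)
        (by rw [MCd_comm Γ.toModularComplex m a]; omega)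
      have hyIam : y ∈ interval Γ.toModularComplex.G a m := by
        simp only [interval, Set.mem_setOf_eq]
        have c1 := MCd_comm Γ.toModularComplex m y
        have c2 := MCd_comm Γ.toModularComplex y a
        have c3 := MCd_comm Γ.toModularComplex m a
        omega
      have hday : Γ.toModularComplex.G.dist a y = n := by
        simp only [interval, Set.mem_setOf_eq] at hyIam
        have c1 := MCd_comm Γ.toModularComplex m y
        omega
      obtain ⟨leay, leym⟩ := MC_interval_le Γ.toModularComplex (Γ.toModularComplex.G.dist a y) a m y leam hyIam rfl
      have oriym : Γ.toModularComplex.ori y m := MC_ori_of_le_dist_one Γ.toModularComplex leym (by rw [MCd_comm Γ.toModularComplex y m]; omega)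
      have hMeetpy : Γ.toModularComplex.IsMeet p y a :=
        ⟨hMeet.1, leay, fun t htp hty => hMeet.2.2 t htp (MC_le_trans Γ.toModularComplex hty leym)⟩
      obtain ⟨w, hw1, hw2, hw3⟩ := Γ.toModularComplex.modular p y b
      obtain ⟨lepw, lewb⟩ := MC_interval_le Γ.toModularComplex (Γ.toModularComplex.G.dist p w) p b w lepb hw3 rfl
      have leyb : Γ.toModularComplex.le y b := MC_le_trans Γ.toModularComplex leym lemb
      have leyw : Γ.toModularComplex.le y w := (MC_interval_le Γ.toModularComplex (Γ.toModularComplex.G.dist y w) y b w leyb hw2 rfl).1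
      have hJoinpyw : Γ.toModularComplex.IsJoin p y w :=
        ⟨lepw, leyw, fun t htp hty => MC_ideal_convex Γ.toModularComplex htp hty hw1⟩
      have sqpw : Γ.sq p w := Γ.sq_interval hsqpb lepw ⟨MC_le_refl Γ.toModularComplex p, lepb⟩ ⟨lepw, lewb⟩
      have sqaw : Γ.sq a w := IH n (by omega) a p y w hsqap sqpw hMeetpy hJoinpyw hday
      have sqyw : Γ.sq y w :=
        Γ.sq_interval sqaw leyw ⟨leay, leyw⟩ ⟨MC_le_trans Γ.toModularComplex leay leyw, MC_le_refl Γ.toModularComplex w⟩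
      have sqym : Γ.sq y m := Γ.sq_edge oriym
      have hJoinmwb : Γ.toModularComplex.IsJoin m w b :=
        ⟨lemb, lewb, fun t htm htw => hJoin.2.2 t (MC_le_trans Γ.toModularComplex lepw htw) htm⟩
      have sqyb : Γ.sq y b := Γ.sq_join sqym sqyw hJoinmwb
      exact Γ.sq_meet hsqpb sqyb hMeetpy

end AuxExt

/-- Properties of the operation `p ◇ q`: with `a` the gate of `q` at
`L^-_p`, `b` the gate of `q` at `L^+_p` and `m` a median of `a,b,q`, we have
`p ∧ m = a`, `p ∨ m = b`, `a ⊑ b` (so `p, m` are ◇-neighbors), and `m ≠ p`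
whenever `p ≠ q`. -/
theorem diamond_op_properties (Γ : ExtendedModularComplex V) (p q a b m : V)
    (ha : IsGate Γ.G (Γ.Lneg p) q a) (hb : IsGate Γ.G (Γ.Lpos p) q b)
    (hm : IsMedian Γ.G a b q m) :
    Γ.IsMeet p m a ∧ Γ.IsJoin p m b ∧ Γ.sq a b ∧ Γ.DiamondNb p m ∧
      (p ≠ q → m ≠ p) := by
  obtain ⟨hsqap, gA⟩ := ha
  obtain ⟨hsqpb, gB⟩ := hb
  obtain ⟨hmab, hmbq, hmaq⟩ := hm
  have hsqap' : Γ.sq a p := hsqap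
  have hsqpb' : Γ.sq p b := hsqpb
  have leap : Γ.toModularComplex.le a p := Γ.sq_le hsqap'
  have lepb : Γ.toModularComplex.le p b := Γ.sq_le hsqpb'
  have leab : Γ.toModularComplex.le a b := MC_le_trans Γ.toModularComplex leap lepb
  obtain ⟨leam, lemb⟩ := MC_interval_le Γ.toModularComplex (Γ.toModularComplex.G.dist a m) a b m leab hmab rfl
  -- gate equations at p itself
  have gAp : Γ.G.dist q p = Γ.G.dist q a + Γ.G.dist a p := gA p (Γ.sq_refl p)
  have gBp : Γ.G.dist q p = Γ.G.dist q b + Γ.G.dist b p := gB p (Γ.sq_refl p)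
  -- unpacked median facts
  have hmab' : Γ.G.dist a m + Γ.G.dist m b = Γ.G.dist a b := hmab
  have hmbq' : Γ.G.dist b m + Γ.G.dist m q = Γ.G.dist b q := hmbq
  have hmaq' : Γ.G.dist a m + Γ.G.dist m q = Γ.G.dist a q := hmaq
  -- (s5) : a ∈ I(p,m)
  have haIpm : a ∈ interval Γ.G p m := by
    obtain ⟨w, hw1, hw2, hw3⟩ := Γ.toModularComplex.modular p a m
    have hw1' : w ∈ interval Γ.G a p := MC_interval_symm Γ.toModularComplex hw1
    obtain ⟨leaw, lewp⟩ := MC_interval_le Γ.toModularComplex (Γ.toModularComplex.G.dist a w) a p w leap hw1' rfl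
    have sqwp : Γ.sq w p := Γ.sq_interval hsqap' lewp ⟨leaw, lewp⟩ ⟨leap, MC_le_refl Γ.toModularComplex p⟩
    have gw : Γ.G.dist q w = Γ.G.dist q a + Γ.G.dist a w := gA w sqwp
    have hwIaq : w ∈ interval Γ.G a q := MC_interval_trans Γ.toModularComplex hw2 hmaq
    have hwaq' : Γ.G.dist a w + Γ.G.dist w q = Γ.G.dist a q := hwIaq
    have c1 := MCd_comm Γ.toModularComplex q w
    have c2 := MCd_comm Γ.toModularComplex q a
    have hda0 : Γ.G.dist a w = 0 := by omega
    have haw : a = w := MCd_eq_zero Γ.toModularComplex hda0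
    rw [haw]
    exact hw3
  -- (s6) : b ∈ I(p,m)
  have hbIpm : b ∈ interval Γ.G p m := by
    obtain ⟨w, hw1, hw2, hw3⟩ := Γ.toModularComplex.modular p b m
    obtain ⟨lepw, lewb⟩ := MC_interval_le Γ.toModularComplex (Γ.toModularComplex.G.dist p w) p b w lepb hw1 rfl
    have sqpw : Γ.sq p w := Γ.sq_interval hsqpb' lepw ⟨MC_le_refl Γ.toModularComplex p, lepb⟩ ⟨lepw, lewb⟩
    have gw : Γ.G.dist q w = Γ.G.dist q b + Γ.G.dist b w := gB w sqpw
    have hwIbq : w ∈ interval Γ.G b q := MC_interval_trans Γ.toModularComplex hw2 hmbq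
    have hwbq' : Γ.G.dist b w + Γ.G.dist w q = Γ.G.dist b q := hwIbq
    have c1 := MCd_comm Γ.toModularComplex q w
    have c2 := MCd_comm Γ.toModularComplex q b
    have hdb0 : Γ.G.dist b w = 0 := by omega
    have hbw : b = w := MCd_eq_zero Γ.toModularComplex hdb0
    rw [hbw]
    exact hw3
  have haIpm' : Γ.G.dist p a + Γ.G.dist a m = Γ.G.dist p m := haIpm
  have hbIpm' : Γ.G.dist p b + Γ.G.dist b m = Γ.G.dist p m := hbIpm
  -- (s8) : IsMeet p m a
  have hMeet : Γ.toModularComplex.IsMeet p m a := by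
    refine ⟨leap, leam, ?_⟩
    intro x hxp hxm
    obtain ⟨t, ht1, ht2, ht3⟩ := Γ.toModularComplex.modular x a p
    obtain ⟨leat, letp⟩ := MC_interval_le Γ.toModularComplex (Γ.toModularComplex.G.dist a t) a p t leap ht2 rfl
    have sqtp : Γ.sq t p := Γ.sq_interval hsqap' letp ⟨leat, letp⟩ ⟨leap, MC_le_refl Γ.toModularComplex p⟩
    have gt : Γ.G.dist q t = Γ.G.dist q a + Γ.G.dist a t := gA t sqtp
    have lext : Γ.toModularComplex.le x t := (MC_interval_le Γ.toModularComplex (Γ.toModularComplex.G.dist x t) x p t hxp ht3 rfl).1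
    have key : a ∈ interval Γ.G m t := by
      show Γ.G.dist m a + Γ.G.dist a t = Γ.G.dist m t
      have tri1 := MCd_tri Γ.toModularComplex q m t
      have tri2 := MCd_tri Γ.toModularComplex m a t
      have c1 := MCd_comm Γ.toModularComplex q a
      have c2 := MCd_comm Γ.toModularComplex q m
      have c3 := MCd_comm Γ.toModularComplex m a
      omega
    exact MC_filter_convex Γ.toModularComplex (Γ.toModularComplex.G.dist m t) x m t a hxm lext key rfl
  -- (s9) : IsJoin p m b
  have hJoin : Γ.toModularComplex.IsJoin p m b := by
    refine ⟨lepb, lemb, ?_⟩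
    intro x hpx hmx
    obtain ⟨t, ht1, ht2, ht3⟩ := Γ.toModularComplex.modular p b x
    obtain ⟨lept, letb⟩ := MC_interval_le Γ.toModularComplex (Γ.toModularComplex.G.dist p t) p b t lepb ht1 rfl
    have sqpt : Γ.sq p t := Γ.sq_interval hsqpb' lept ⟨MC_le_refl Γ.toModularComplex p, lepb⟩ ⟨lept, letb⟩
    have gt : Γ.G.dist q t = Γ.G.dist q b + Γ.G.dist b t := gB t sqpt
    have letx : Γ.toModularComplex.le t x := (MC_interval_le Γ.toModularComplex (Γ.toModularComplex.G.dist p t) p x t hpx ht3 rfl).2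
    have key : b ∈ interval Γ.G m t := by
      show Γ.G.dist m b + Γ.G.dist b t = Γ.G.dist m t
      have tri1 := MCd_tri Γ.toModularComplex q m t
      have tri2 := MCd_tri Γ.toModularComplex m b t
      have c1 := MCd_comm Γ.toModularComplex q b
      have c2 := MCd_comm Γ.toModularComplex q m
      have c3 := MCd_comm Γ.toModularComplex m b
      omega
    exact MC_ideal_convex Γ.toModularComplex hmx letx key
  -- (s10) : sq a b
  have sqab : Γ.sq a b := EMC_diamond_sq Γ (Γ.G.dist a m) a p m b hsqap' hsqpb' hMeet hJoin rfl
  refine ⟨hMeet, hJoin, sqab, ⟨a, b, sqab, ⟨leap, lepb⟩, ⟨leam, lemb⟩⟩, ?_⟩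
  -- (s12) : p ≠ q → m ≠ p
  intro hpq hmp
  rw [hmp] at haIpm' hbIpm'
  have hselfp := MCd_self Γ.toModularComplex p
  have cpa := MCd_comm Γ.toModularComplex p a
  have cpb := MCd_comm Γ.toModularComplex p b
  have hpa : p = a := MCd_eq_zero Γ.toModularComplex (show Γ.G.dist p a = 0 by omega)
  have hpb : p = b := MCd_eq_zero Γ.toModularComplex (show Γ.G.dist p b = 0 by omega)
  have hdpq : 0 < Γ.G.dist p q := Γ.toModularComplex.connected.pos_dist_of_ne hpq
  obtain ⟨y, hy1, hy2⟩ := MC_first_step Γ.toModularComplex (x := p) (z := q) (by omega)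
  have hadj : Γ.G.Adj p y := MCd_adj Γ.toModularComplex hy1
  have cqy := MCd_comm Γ.toModularComplex q y
  have cqp := MCd_comm Γ.toModularComplex q p
  rcases Γ.toModularComplex.ori_total hadj with hpy | hyp
  · have sqpy : Γ.sq p y := Γ.sq_edge hpy
    have e1 : Γ.G.dist q y = Γ.G.dist q b + Γ.G.dist b y := gB y sqpy
    rw [← hpb] at e1
    omega
  · have sqyp : Γ.sq y p := Γ.sq_edge hyp
    have e1 : Γ.G.dist q y = Γ.G.dist q a + Γ.G.dist a y := gA y sqyp
    rw [← hpa] at e1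
    omega
end ZeroExt
end
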